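/- arXiv:1212.5490 — 3 statements merged into one kernel-verified Lean document; each statement's English description precedes it below -/
import Mathlib

section
/- Let A be a d×d matrix of rank exactly r and B a d×d matrix. Then as h ↓ 0, det(A + hB) = h^{d-r} γ_r(A,B) + O(h^{d-r+1}), where γ_r(A,B) = Σ_{|I|=r} det(G_{A,B}^I). -/
noncomputable def colMix {d : ℕ} (A B : Matrix (Fin d) (Fin d) ℝ) (I : Finset (Fin d)) :
    Matrix (Fin d) (Fin d) ℝ :=
  Matrix.of fun i j => if j ∈ I then A i j else B i j

noncomputable def gammaR {d : ℕ} (r : ℕ) (A B : Matrix (Fin d) (Fin d) ℝ) : ℝ :=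
  ∑ I ∈ Finset.univ.powersetCard r, (colMix A B I).det

open Matrix in
/-- Multilinear expansion of the determinant of `A + h • B` over subsets of columns. -/
lemma det_expand {d : ℕ} (A B : Matrix (Fin d) (Fin d) ℝ) (h : ℝ) :
    (A + h • B).det = ∑ I : Finset (Fin d), h ^ (d - I.card) * (colMix A B I).det := by
  classical
  let f := (Matrix.detRowAlternating : (Fin d → ℝ) [⋀^Fin d]→ₗ[ℝ] ℝ).toMultilinearMap
  have hT : (A + h • B)ᵀ = Aᵀ + h • Bᵀ := by
    ext i j; simp [Matrix.transpose_apply]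
  have h1 : (A + h • B).det = f (Aᵀ + h • Bᵀ) := by
    rw [← Matrix.det_transpose, hT]; rfl
  rw [h1]
  erw [MultilinearMap.map_add_univ]
  refine Finset.sum_congr rfl fun s _ => ?_
  have hp : s.piecewise (Aᵀ) (h • Bᵀ)
      = fun i => (if i ∈ s then (1:ℝ) else h) • ((colMix A B s)ᵀ i) := by
    funext i
    funext j
    by_cases hi : i ∈ s <;>
      simp [Finset.piecewise, hi, colMix, Matrix.transpose_apply]
  rw [hp]
  erw [f.map_smul_univ]
  have hprod : (∏ i, (if i ∈ s then (1:ℝ) else h)) = h ^ (d - s.card) := by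
    have e1 : ∏ i ∈ s, (if i ∈ s then (1:ℝ) else h) = 1 :=
      Finset.prod_eq_one fun i hi => by simp [hi]
    have e2 : ∏ i ∈ sᶜ, (if i ∈ s then (1:ℝ) else h) = h ^ (d - s.card) := by
      have e3 : ∀ i ∈ sᶜ, (if i ∈ s then (1:ℝ) else h) = h :=
        fun i hi => by simp [Finset.mem_compl.mp hi]
      rw [Finset.prod_congr rfl e3, Finset.prod_const, Finset.card_compl, Fintype.card_fin]
    rw [← Finset.prod_mul_prod_compl s, e1, e2, one_mul]
  have hdet : f ((colMix A B s)ᵀ) = (colMix A B s).det := by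
    rw [← Matrix.det_transpose]; rfl
  rw [hprod, hdet, smul_eq_mul]

open Matrix in
/-- If more than `rank A` columns come from `A`, the mixed determinant vanishes. -/
lemma det_colMix_eq_zero {d r : ℕ} {A B : Matrix (Fin d) (Fin d) ℝ}
    (hA : A.rank = r) {I : Finset (Fin d)} (hI : r < I.card) :
    (colMix A B I).det = 0 := by
  classical
  by_contra hne
  have hu : IsUnit (colMix A B I) :=
    (Matrix.isUnit_iff_isUnit_det _).mpr (isUnit_iff_ne_zero.mpr hne)
  have hli : LinearIndependent ℝ (fun j => (colMix A B I)ᵀ j) :=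
    Matrix.linearIndependent_cols_iff_isUnit.mpr hu
  have hli' : LinearIndependent ℝ (fun j : I => (colMix A B I)ᵀ (j : Fin d)) :=
    hli.comp _ Subtype.val_injective
  have heq : (fun j : I => (colMix A B I)ᵀ (j : Fin d)) = fun j : I => Aᵀ (j : Fin d) := by
    funext j
    funext i
    simp [colMix, Matrix.transpose_apply, j.2]
  rw [heq] at hli'
  set W : Submodule ℝ (Fin d → ℝ) := Submodule.span ℝ (Set.range Aᵀ) with hW
  have hmem : ∀ j : I, Aᵀ (j : Fin d) ∈ W :=
    fun j => Submodule.subset_span ⟨(j : Fin d), rfl⟩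
  let v : I → W := fun j => ⟨Aᵀ (j : Fin d), hmem j⟩
  have hv : LinearIndependent ℝ v := by
    apply LinearIndependent.of_comp W.subtype
    exact hli'
  have hcard : Fintype.card I ≤ Module.finrank ℝ W :=
    hv.fintype_card_le_finrank
  rw [Fintype.card_coe] at hcard
  have hrank : Module.finrank ℝ W = r := by
    rw [hW, ← hA, Matrix.rank_eq_finrank_span_cols]; rfl
  omega

theorem det_perturbation_expansion (d r : ℕ) (A B : Matrix (Fin d) (Fin d) ℝ)
    (hA : A.rank = r) :
    ∃ C > (0:ℝ), ∀ h : ℝ, h ∈ Set.Ioc (0:ℝ) 1 →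
      |(A + h • B).det - h ^ (d - r) * gammaR r A B| ≤ C * h ^ (d - r + 1) := by
  classical
  have hrd : r ≤ d := by
    have := A.rank_le_card_width
    simp only [Fintype.card_fin] at this
    omega
  set C0 : ℝ := ∑ I : Finset (Fin d), |(colMix A B I).det| with hC0
  have hC0nn : 0 ≤ C0 := Finset.sum_nonneg fun _ _ => abs_nonneg _
  refine ⟨C0 + 1, by linarith, ?_⟩
  rintro h ⟨h0, h1⟩
  have hgamma : gammaR r A B
      = ∑ I ∈ Finset.univ.filter (fun I : Finset (Fin d) => I.card = r), (colMix A B I).det := by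
    rw [gammaR, Finset.powersetCard_eq_filter, Finset.powerset_univ]
  have hkey := det_expand A B h
  rw [← Finset.sum_filter_add_sum_filter_not Finset.univ
      (fun I : Finset (Fin d) => I.card = r)] at hkey
  have hfirst : ∑ I ∈ Finset.univ.filter (fun I : Finset (Fin d) => I.card = r),
      h ^ (d - I.card) * (colMix A B I).det = h ^ (d - r) * gammaR r A B := by
    rw [hgamma, Finset.mul_sum]
    refine Finset.sum_congr rfl fun I hI => ?_
    rw [(Finset.mem_filter.mp hI).2]
  rw [hfirst] at hkey
  have hrw : (A + h • B).det - h ^ (d - r) * gammaR r A B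
      = ∑ I ∈ Finset.univ.filter (fun I : Finset (Fin d) => ¬ I.card = r),
          h ^ (d - I.card) * (colMix A B I).det := by
    rw [hkey]; ring
  rw [hrw]
  calc |∑ I ∈ Finset.univ.filter (fun I : Finset (Fin d) => ¬ I.card = r),
          h ^ (d - I.card) * (colMix A B I).det|
      ≤ ∑ I ∈ Finset.univ.filter (fun I : Finset (Fin d) => ¬ I.card = r),
          |h ^ (d - I.card) * (colMix A B I).det| := Finset.abs_sum_le_sum_abs _ _
    _ ≤ ∑ I ∈ Finset.univ.filter (fun I : Finset (Fin d) => ¬ I.card = r),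
          h ^ (d - r + 1) * |(colMix A B I).det| := by
        refine Finset.sum_le_sum fun I hI => ?_
        have hne : I.card ≠ r := (Finset.mem_filter.mp hI).2
        rcases lt_or_gt_of_ne hne with hlt | hgt
        · -- card I < r : exponent is at least d - r + 1
          rw [abs_mul, abs_pow, abs_of_pos h0]
          have hexp : d - r + 1 ≤ d - I.card := by omega
          have : h ^ (d - I.card) ≤ h ^ (d - r + 1) :=
            pow_le_pow_of_le_one h0.le h1 hexp
          exact mul_le_mul_of_nonneg_right this (abs_nonneg _)
        · -- card I > r : determinant vanishes
          rw [det_colMix_eq_zero hA hgt]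
          simp
    _ ≤ h ^ (d - r + 1) * C0 := by
        rw [← Finset.mul_sum]
        refine mul_le_mul_of_nonneg_left ?_ (by positivity)
        exact Finset.sum_le_sum_of_subset_of_nonneg (Finset.filter_subset _ _)
          fun _ _ _ => abs_nonneg _
    _ ≤ (C0 + 1) * h ^ (d - r + 1) := by
        rw [mul_comm]
        have : (0:ℝ) < h ^ (d - r + 1) := by positivity
        nlinarith
end

section
/- There is a constant K = K(d) such that for all r ∈ {0,…,d}, all h ∈ (0,1], and all d×d matrices A, B, C, D with rank(A) ≤ r: |det(A + hB + h²C + h²D) − h^{d-r} γ_r(A,B) − h^{d-r+1}(γ_{r-1}(A,B) + γ'_r(A,B,C))| ≤ K h^{d-r+1} Λ^{d-1}(hΛ + ‖D‖), where Λ = ‖A‖+‖B‖+‖C‖+‖D‖. -/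
/-- `γ_{r-1}(A,B)`, with the convention `γ_{-1} = 0`. -/
noncomputable def gammaPred {d : ℕ} (r : ℕ) (A B : Matrix (Fin d) (Fin d) ℝ) : ℝ :=
  if r = 0 then 0 else gammaR (r - 1) A B

/-- `γ'_r(A,B,C)`: sum over ordered partitions `(I₁,I₂,I₃)` of sizes `r, d-r-1, 1`,
with columns of `A` on `I₁`, of `C` on the singleton `I₃`, of `B` elsewhere. -/
noncomputable def gamma' {d : ℕ} (r : ℕ) (A B C : Matrix (Fin d) (Fin d) ℝ) : ℝ :=
  ∑ I ∈ Finset.univ.powersetCard r, ∑ k ∈ Iᶜ,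
    Matrix.det (Matrix.of fun i j =>
      if j ∈ I then A i j else if j = k then C i j else B i j)

/-- Frobenius (Euclidean) norm of a matrix. -/
noncomputable def frob {d : ℕ} (A : Matrix (Fin d) (Fin d) ℝ) : ℝ :=
  Real.sqrt (∑ i, ∑ j, (A i j) ^ 2)

namespace DetExp

variable {d : ℕ}

lemma frob_nonneg (A : Matrix (Fin d) (Fin d) ℝ) : 0 ≤ frob A := Real.sqrt_nonneg _

lemma abs_entry_le_frob (A : Matrix (Fin d) (Fin d) ℝ) (i j : Fin d) : |A i j| ≤ frob A := by
  rw [← Real.sqrt_sq_eq_abs]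
  apply Real.sqrt_le_sqrt
  calc A i j ^ 2 ≤ ∑ j', A i j' ^ 2 :=
        Finset.single_le_sum (fun k _ => sq_nonneg (A i k)) (Finset.mem_univ j)
    _ ≤ ∑ i', ∑ j', A i' j' ^ 2 :=
        Finset.single_le_sum (f := fun i' => ∑ j', A i' j' ^ 2)
          (fun k _ => Finset.sum_nonneg fun l _ => sq_nonneg (A k l)) (Finset.mem_univ i)

lemma abs_det_le (M : Matrix (Fin d) (Fin d) ℝ) (b : Fin d → ℝ)
    (hb : ∀ i j, |M i j| ≤ b j) : |M.det| ≤ (d.factorial : ℝ) * ∏ j, b j := by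
  rw [Matrix.det_apply]
  calc |∑ σ : Equiv.Perm (Fin d), Equiv.Perm.sign σ • ∏ i, M (σ i) i|
      ≤ ∑ σ : Equiv.Perm (Fin d), |Equiv.Perm.sign σ • ∏ i, M (σ i) i| :=
        Finset.abs_sum_le_sum_abs _ _
    _ ≤ ∑ _σ : Equiv.Perm (Fin d), ∏ j, b j := by
        apply Finset.sum_le_sum
        intro σ _
        have h1 : |Equiv.Perm.sign σ • ∏ i, M (σ i) i| = |∏ i, M (σ i) i| := by
          rcases Int.units_eq_one_or (Equiv.Perm.sign σ) with h | h <;>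
            simp [h, Units.smul_def]
        rw [h1, Finset.abs_prod]
        exact Finset.prod_le_prod (fun i _ => abs_nonneg _) (fun i _ => hb _ i)
    _ = (d.factorial : ℝ) * ∏ j, b j := by
        rw [Finset.sum_const, nsmul_eq_mul]
        congr 1
        simp [Fintype.card_perm]

lemma det_eq_zero_of_rank_lt (A : Matrix (Fin d) (Fin d) ℝ) (r : ℕ) (hA : A.rank ≤ r)
    (M : Matrix (Fin d) (Fin d) ℝ) (S : Finset (Fin d)) (hS : r < S.card)
    (hcols : ∀ i : Fin d, ∀ j ∈ S, M i j = A i j) : M.det = 0 := by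
  by_contra hdet
  have hU : IsUnit M := (Matrix.isUnit_iff_isUnit_det M).2 (isUnit_iff_ne_zero.2 hdet)
  have hli : LinearIndependent ℝ (fun j => M.transpose j) :=
    Matrix.linearIndependent_cols_iff_isUnit.2 hU
  have hli2 : LinearIndependent ℝ (fun j : {x // x ∈ S} => A.transpose (j : Fin d)) := by
    have h2 := hli.comp (fun j : {x // x ∈ S} => (j : Fin d)) Subtype.val_injective
    convert h2 using 1
    funext j
    funext i
    exact (hcols i j j.2).symm
  have hsub : Submodule.span ℝ (Set.range (fun j : {x // x ∈ S} => A.transpose (j : Fin d)))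
      ≤ Submodule.span ℝ (Set.range A.transpose) := by
    apply Submodule.span_mono
    rintro x ⟨j, rfl⟩
    exact ⟨j, rfl⟩
  have h2 : Module.finrank ℝ
      (Submodule.span ℝ (Set.range (fun j : {x // x ∈ S} => A.transpose (j : Fin d))))
      = S.card := by
    rw [finrank_span_eq_card hli2, Fintype.card_coe]
  have h3 := Submodule.finrank_mono hsub
  rw [h2, ← (show A.rank = Module.finrank ℝ (Submodule.span ℝ (Set.range A.transpose)) from
    Matrix.rank_eq_finrank_span_cols A)] at h3
  omega

noncomputable def pick (A B C D : Matrix (Fin d) (Fin d) ℝ) : Fin 4 → Matrix (Fin d) (Fin d) ℝ :=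
  ![A, B, C, D]

noncomputable def G (A B C D : Matrix (Fin d) (Fin d) ℝ) (f : Fin d → Fin 4) :
    Matrix (Fin d) (Fin d) ℝ :=
  Matrix.of fun i j => pick A B C D (f j) i j

def ee : Fin 4 → ℕ := ![0, 1, 2, 2]

def W (f : Fin d → Fin 4) : ℕ := ∑ j, ee (f j)

def cnt (t : Fin 4) (f : Fin d → Fin 4) : ℕ := (Finset.univ.filter fun j => f j = t).card

lemma fin4_cases (t : Fin 4) : t = 0 ∨ t = 1 ∨ t = 2 ∨ t = 3 := by
  revert t; decide

lemma cnt_eq_zero {t : Fin 4} {f : Fin d → Fin 4} (h : cnt t f = 0) : ∀ j, f j ≠ t := by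
  intro j
  have := Finset.card_eq_zero.mp h
  rw [Finset.filter_eq_empty_iff] at this
  exact this (Finset.mem_univ j)

lemma cnt_sum (f : Fin d → Fin 4) : cnt 0 f + cnt 1 f + cnt 2 f + cnt 3 f = d := by
  have h := Finset.card_eq_sum_card_fiberwise (f := f) (s := Finset.univ) (t := Finset.univ)
    (fun x _ => Finset.mem_univ (f x))
  rw [Finset.card_univ, Fintype.card_fin, Fin.sum_univ_four] at h
  simp only [cnt]
  omega

lemma W_eq (f : Fin d → Fin 4) : W f = cnt 1 f + 2 * cnt 2 f + 2 * cnt 3 f := by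
  have h1 : ∀ t : Fin 4, ∑ j ∈ Finset.univ.filter (fun j => f j = t), ee (f j)
      = cnt t f * ee t := by
    intro t
    rw [Finset.sum_congr rfl (fun j hj => by rw [(Finset.mem_filter.1 hj).2]),
      Finset.sum_const, smul_eq_mul]
    rfl
  have h2 := Finset.sum_fiberwise Finset.univ f (fun j => ee (f j))
  rw [Fin.sum_univ_four, h1 0, h1 1, h1 2, h1 3] at h2
  rw [W, ← h2]
  simp [ee]
  ring

lemma det_expand (A B C D : Matrix (Fin d) (Fin d) ℝ) (h : ℝ) :
    (A + h • B + (h ^ 2) • C + (h ^ 2) • D).det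
      = ∑ f : Fin d → Fin 4, h ^ W f * (G A B C D f).det := by
  have key := (Matrix.detRowAlternating (n := Fin d) (R := ℝ)).toMultilinearMap.map_sum
      (g := fun (j : Fin d) (t : Fin 4) => (h ^ ee t) • (fun i => pick A B C D t i j))
  have hM : ((A + h • B + (h ^ 2) • C + (h ^ 2) • D).transpose : Matrix (Fin d) (Fin d) ℝ)
      = fun j => ∑ t : Fin 4, (h ^ ee t) • (fun i => pick A B C D t i j) := by
    funext j i
    simp [Fin.sum_univ_four, pick, ee, Matrix.transpose_apply, Matrix.add_apply,
      Matrix.smul_apply]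
  rw [← Matrix.det_transpose]
  have lhs_eq : ((A + h • B + (h ^ 2) • C + (h ^ 2) • D).transpose).det
      = (Matrix.detRowAlternating (n := Fin d) (R := ℝ)).toMultilinearMap
          (fun j => ∑ t : Fin 4, (h ^ ee t) • (fun i => pick A B C D t i j)) := by
    rw [← hM]; rfl
  rw [lhs_eq, key]
  apply Finset.sum_congr rfl
  intro f _
  have hterm := (Matrix.detRowAlternating (n := Fin d) (R := ℝ)).toMultilinearMap.map_smul_univ
      (fun j => h ^ ee (f j)) (fun j => fun i => pick A B C D (f j) i j)
  rw [hterm, Finset.prod_pow_eq_pow_sum]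
  have hdet : (Matrix.detRowAlternating (n := Fin d) (R := ℝ)).toMultilinearMap
      (fun j => fun i => pick A B C D (f j) i j) = (G A B C D f).det := by
    rw [← Matrix.det_transpose]; rfl
  rw [hdet, smul_eq_mul]
  rfl

lemma cnt_ite0 (I : Finset (Fin d)) :
    cnt 0 (fun j => if j ∈ I then (0 : Fin 4) else 1) = I.card := by
  unfold cnt
  congr 1
  ext j
  by_cases hj : j ∈ I <;> simp [hj]

lemma cnt_ite_ne (I : Finset (Fin d)) (t : Fin 4) (h0 : t ≠ 0) (h1 : t ≠ 1) :
    cnt t (fun j => if j ∈ I then (0 : Fin 4) else 1) = 0 := by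
  unfold cnt
  rw [Finset.card_eq_zero, Finset.filter_eq_empty_iff]
  intro j _
  by_cases hj : j ∈ I <;> simp [hj]
  · exact fun hh => h0 hh.symm
  · exact fun hh => h1 hh.symm

lemma sum_class1 (A B C D : Matrix (Fin d) (Fin d) ℝ) (h : ℝ) (r : ℕ) :
    ∑ f ∈ Finset.univ.filter
        (fun f : Fin d → Fin 4 => cnt 2 f = 0 ∧ cnt 3 f = 0 ∧ cnt 0 f = r),
      h ^ W f * (G A B C D f).det
    = h ^ (d - r) * gammaR r A B := by
  rw [gammaR, Finset.mul_sum]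
  symm
  apply Finset.sum_bij (i := fun I _ => fun j => if j ∈ I then (0 : Fin 4) else 1)
  · intro I hI
    rw [Finset.mem_powersetCard] at hI
    simp only [Finset.mem_filter, Finset.mem_univ, true_and]
    exact ⟨cnt_ite_ne I 2 (by decide) (by decide), cnt_ite_ne I 3 (by decide) (by decide),
      by rw [cnt_ite0, hI.2]⟩
  · intro I hI I' hI' hf
    ext j
    have hj := congrFun hf j
    by_cases h1 : j ∈ I <;> by_cases h2 : j ∈ I' <;> simp [h1, h2] at hj ⊢
  · intro f hf
    simp only [Finset.mem_filter, Finset.mem_univ, true_and] at hf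
    obtain ⟨h2, h3, h0⟩ := hf
    refine ⟨Finset.univ.filter (fun j => f j = 0),
      Finset.mem_powersetCard.mpr ⟨Finset.subset_univ _, h0⟩, ?_⟩
    · funext j
      have e2 := cnt_eq_zero h2 j
      have e3 := cnt_eq_zero h3 j
      rcases fin4_cases (f j) with hv | hv | hv | hv
      · simp [hv]
      · simp [hv]
      · exact absurd hv e2
      · exact absurd hv e3
  · intro I hI
    rw [Finset.mem_powersetCard] at hI
    have e0 := cnt_ite0 I
    have e2 := cnt_ite_ne I 2 (by decide) (by decide)
    have e3 := cnt_ite_ne I 3 (by decide) (by decide)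
    have es := cnt_sum (fun j => if j ∈ I then (0 : Fin 4) else 1)
    have hW : W (fun j => if j ∈ I then (0 : Fin 4) else 1) = d - r := by
      rw [W_eq]
      rw [hI.2] at e0
      omega
    rw [hW]
    have hGm : colMix A B I = G A B C D (fun j => if j ∈ I then (0 : Fin 4) else 1) := by
      ext i j
      by_cases hj : j ∈ I <;> simp [colMix, G, pick, hj]
    rw [hGm]

lemma sum_class2 (A B C D : Matrix (Fin d) (Fin d) ℝ) (h : ℝ) (r : ℕ) (hr : r ≤ d) :
    ∑ f ∈ Finset.univ.filter
        (fun f : Fin d → Fin 4 => cnt 2 f = 0 ∧ cnt 3 f = 0 ∧ cnt 0 f + 1 = r),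
      h ^ W f * (G A B C D f).det
    = h ^ (d - r + 1) * gammaPred r A B := by
  rcases Nat.eq_zero_or_pos r with rfl | hrpos
  · have hemp : Finset.univ.filter
        (fun f : Fin d → Fin 4 => cnt 2 f = 0 ∧ cnt 3 f = 0 ∧ cnt 0 f + 1 = 0) = ∅ :=
      Finset.filter_eq_empty_iff.mpr (fun f _ => by rintro ⟨-, -, hc⟩; omega)
    rw [hemp, Finset.sum_empty, gammaPred, if_pos rfl, mul_zero]
  · have hfil : Finset.univ.filter
        (fun f : Fin d → Fin 4 => cnt 2 f = 0 ∧ cnt 3 f = 0 ∧ cnt 0 f + 1 = r)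
        = Finset.univ.filter
          (fun f : Fin d → Fin 4 => cnt 2 f = 0 ∧ cnt 3 f = 0 ∧ cnt 0 f = r - 1) :=
      Finset.filter_congr (fun f _ => by
        constructor <;> rintro ⟨a, b, c⟩ <;> exact ⟨a, b, by omega⟩)
    rw [hfil, sum_class1, gammaPred, if_neg (by omega)]
    have : d - (r - 1) = d - r + 1 := by omega
    rw [this]

lemma sum_class3 (A B C D : Matrix (Fin d) (Fin d) ℝ) (h : ℝ) (r : ℕ) :
    ∑ f ∈ Finset.univ.filter
        (fun f : Fin d → Fin 4 => cnt 2 f = 1 ∧ cnt 3 f = 0 ∧ cnt 0 f = r),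
      h ^ W f * (G A B C D f).det
    = h ^ (d - r + 1) * gamma' r A B C := by
  have hre : h ^ (d - r + 1) * gamma' r A B C
      = ∑ p ∈ (Finset.univ.powersetCard r).sigma (fun I => Iᶜ),
          h ^ (d - r + 1) * Matrix.det (Matrix.of fun i j =>
            if j ∈ p.1 then A i j else if j = p.2 then C i j else B i j) := by
    rw [Finset.sum_sigma, gamma', Finset.mul_sum]
    exact Finset.sum_congr rfl fun I _ => Finset.mul_sum _ _ _
  rw [hre]
  symm
  apply Finset.sum_bij (i := fun p _ =>
    fun j => if j ∈ p.1 then (0 : Fin 4) else if j = p.2 then 2 else 1)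
  · rintro ⟨I, k⟩ hp
    rw [Finset.mem_sigma, Finset.mem_powersetCard] at hp
    obtain ⟨⟨-, hcard⟩, hk⟩ := hp
    rw [Finset.mem_compl] at hk
    simp only [Finset.mem_filter, Finset.mem_univ, true_and]
    refine ⟨?_, ?_, ?_⟩
    · unfold cnt
      rw [Finset.card_eq_one]
      refine ⟨k, ?_⟩
      ext j
      simp only [Finset.mem_filter, Finset.mem_univ, true_and, Finset.mem_singleton]
      constructor
      · intro hj
        by_cases h1 : j ∈ I
        · simp [h1] at hj
        · by_cases h2 : j = k
          · exact h2
          · simp [h1, h2] at hj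
      · rintro rfl
        simp [hk]
    · unfold cnt
      rw [Finset.card_eq_zero, Finset.filter_eq_empty_iff]
      intro j _
      by_cases h1 : j ∈ I
      · simp [h1]
      · by_cases h2 : j = k
        · subst h2; simp [h1]
        · simp [h1, h2]
    · unfold cnt
      rw [← hcard]
      congr 1
      ext j
      simp only [Finset.mem_filter, Finset.mem_univ, true_and]
      constructor
      · intro hj
        by_cases h1 : j ∈ I
        · exact h1
        · by_cases h2 : j = k
          · subst h2; simp [h1] at hj
          · simp [h1, h2] at hj
      · intro hj
        simp [hj]
  · rintro ⟨I, k⟩ hp ⟨I', k'⟩ hq hfun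
    rw [Finset.mem_sigma, Finset.mem_powersetCard] at hp hq
    have hkI : k ∉ I := Finset.mem_compl.mp hp.2
    have hkI' : k' ∉ I' := Finset.mem_compl.mp hq.2
    have hII : I = I' := by
      ext j
      have hj := congrFun hfun j
      dsimp only at hj
      constructor
      · intro h1
        by_contra h2
        rw [if_pos h1, if_neg h2] at hj
        by_cases h4 : j = k' <;> simp [h4] at hj
      · intro h2
        by_contra h1
        rw [if_pos h2, if_neg h1] at hj
        by_cases h3 : j = k <;> simp [h3] at hj
    subst hII
    have hkk : k = k' := by
      have hj := congrFun hfun k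
      by_cases h4 : k = k'
      · exact h4
      · simp [hkI, h4] at hj
    subst hkk
    rfl
  · intro f hf
    simp only [Finset.mem_filter, Finset.mem_univ, true_and] at hf
    obtain ⟨h2, h3, h0⟩ := hf
    obtain ⟨k, hk⟩ := Finset.card_eq_one.mp h2
    have hfk : f k = 2 := by
      have : k ∈ Finset.univ.filter (fun j => f j = 2) := by rw [hk]; exact Finset.mem_singleton_self k
      exact (Finset.mem_filter.mp this).2
    have hkI : k ∉ Finset.univ.filter (fun j => f j = 0) := by
      simp only [Finset.mem_filter, Finset.mem_univ, true_and]
      rw [hfk]; decide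
    refine ⟨⟨Finset.univ.filter (fun j => f j = 0), k⟩, ?_, ?_⟩
    · rw [Finset.mem_sigma, Finset.mem_powersetCard]
      exact ⟨⟨Finset.subset_univ _, h0⟩, Finset.mem_compl.mpr hkI⟩
    · funext j
      have e3 := cnt_eq_zero h3 j
      rcases fin4_cases (f j) with hv | hv | hv | hv
      · simp [hv]
      · have hj0 : j ∉ Finset.univ.filter (fun j => f j = 0) := by
          simp only [Finset.mem_filter, Finset.mem_univ, true_and]
          rw [hv]; decide
        have hjk : j ≠ k := by
          intro hh; rw [hh, hfk] at hv; exact absurd hv (by decide)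
        simp [hj0, hjk, hv]
      · have hjk : j = k := by
          have : j ∈ Finset.univ.filter (fun j => f j = 2) := by
            simp only [Finset.mem_filter, Finset.mem_univ, true_and]; exact hv
          rw [hk] at this
          exact Finset.mem_singleton.mp this
        subst hjk
        simp [hkI, hfk]
      · exact absurd hv e3
  · rintro ⟨I, k⟩ hp
    rw [Finset.mem_sigma, Finset.mem_powersetCard] at hp
    obtain ⟨⟨-, hcard⟩, hkc⟩ := hp
    have hk : k ∉ I := Finset.mem_compl.mp hkc
    set g : Fin d → Fin 4 := fun j => if j ∈ I then (0 : Fin 4) else if j = k then 2 else 1 with hg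
    have e0 : cnt 0 g = r := by
      unfold cnt
      rw [← hcard]
      congr 1
      ext j
      simp only [Finset.mem_filter, Finset.mem_univ, true_and, hg]
      constructor
      · intro hj
        by_cases h1 : j ∈ I
        · exact h1
        · by_cases h2 : j = k
          · subst h2; simp [h1] at hj
          · simp [h1, h2] at hj
      · intro hj; simp [hj]
    have e2 : cnt 2 g = 1 := by
      unfold cnt
      rw [Finset.card_eq_one]
      refine ⟨k, ?_⟩
      ext j
      simp only [Finset.mem_filter, Finset.mem_univ, true_and, Finset.mem_singleton, hg]
      constructor
      · intro hj
        by_cases h1 : j ∈ I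
        · simp [h1] at hj
        · by_cases h2 : j = k
          · exact h2
          · simp [h1, h2] at hj
      · rintro rfl; simp [hk]
    have e3 : cnt 3 g = 0 := by
      unfold cnt
      rw [Finset.card_eq_zero, Finset.filter_eq_empty_iff]
      intro j _
      simp only [hg]
      by_cases h1 : j ∈ I
      · simp [h1]
      · by_cases h2 : j = k
        · subst h2; simp [h1]
        · simp [h1, h2]
    have es := cnt_sum g
    have hW : W g = d - r + 1 := by
      rw [W_eq, e2, e3, e0] at *
      omega
    have hmat : (Matrix.of fun i j =>
        if j ∈ I then A i j else if j = k then C i j else B i j) = G A B C D g := by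
      ext i j
      simp only [Matrix.of_apply, G, pick, hg]
      by_cases h1 : j ∈ I
      · simp [h1]
      · by_cases h2 : j = k
        · subst h2; simp [h1]
        · simp [h1, h2]
    rw [hW, hmat]

lemma sum_class0 (A B C D : Matrix (Fin d) (Fin d) ℝ) (h : ℝ) (r : ℕ) (hA : A.rank ≤ r) :
    ∑ f ∈ Finset.univ.filter (fun f : Fin d → Fin 4 => r < cnt 0 f),
      h ^ W f * (G A B C D f).det = 0 := by
  apply Finset.sum_eq_zero
  intro f hf
  simp only [Finset.mem_filter] at hf
  rw [det_eq_zero_of_rank_lt A r hA _ (Finset.univ.filter fun j => f j = 0) hf.2 ?_, mul_zero]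
  intro i j hj
  have hfj : f j = 0 := (Finset.mem_filter.mp hj).2
  simp [G, pick, hfj]

lemma entry_bound (A B C D : Matrix (Fin d) (Fin d) ℝ) (f : Fin d → Fin 4) (i j : Fin d) :
    |G A B C D f i j| ≤ frob A + frob B + frob C + frob D := by
  have nA := frob_nonneg A
  have nB := frob_nonneg B
  have nC := frob_nonneg C
  have nD := frob_nonneg D
  rcases fin4_cases (f j) with hv | hv | hv | hv
  · have hGv : G A B C D f i j = A i j := by simp [G, pick, hv]
    rw [hGv]
    have := abs_entry_le_frob A i j
    linarith
  · have hGv : G A B C D f i j = B i j := by simp [G, pick, hv]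
    rw [hGv]
    have := abs_entry_le_frob B i j
    linarith
  · have hGv : G A B C D f i j = C i j := by simp [G, pick, hv]
    rw [hGv]
    have := abs_entry_le_frob C i j
    linarith
  · have hGv : G A B C D f i j = D i j := by simp [G, pick, hv]
    rw [hGv]
    have := abs_entry_le_frob D i j
    linarith


def cls (r : ℕ) (f : Fin d → Fin 4) : Fin 6 :=
  if r < cnt 0 f then 0
  else if cnt 2 f = 0 ∧ cnt 3 f = 0 ∧ cnt 0 f = r then 1
  else if cnt 2 f = 0 ∧ cnt 3 f = 0 ∧ cnt 0 f + 1 = r then 2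
  else if cnt 2 f = 1 ∧ cnt 3 f = 0 ∧ cnt 0 f = r then 3
  else if cnt 2 f = 0 ∧ cnt 3 f = 1 ∧ cnt 0 f = r then 4
  else 5

lemma cls_iff0 {r : ℕ} {f : Fin d → Fin 4} : cls r f = 0 ↔ r < cnt 0 f := by
  unfold cls
  split_ifs <;> simp_all <;> omega

lemma cls_iff1 {r : ℕ} {f : Fin d → Fin 4} :
    cls r f = 1 ↔ (cnt 2 f = 0 ∧ cnt 3 f = 0 ∧ cnt 0 f = r) := by
  unfold cls
  split_ifs <;> simp_all <;> omega

lemma cls_iff2 {r : ℕ} {f : Fin d → Fin 4} :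
    cls r f = 2 ↔ (cnt 2 f = 0 ∧ cnt 3 f = 0 ∧ cnt 0 f + 1 = r) := by
  unfold cls
  split_ifs <;> simp_all <;> omega

lemma cls_iff3 {r : ℕ} {f : Fin d → Fin 4} :
    cls r f = 3 ↔ (cnt 2 f = 1 ∧ cnt 3 f = 0 ∧ cnt 0 f = r) := by
  unfold cls
  split_ifs <;> simp_all <;> omega

lemma cls_iff4 {r : ℕ} {f : Fin d → Fin 4} :
    cls r f = 4 ↔ (cnt 2 f = 0 ∧ cnt 3 f = 1 ∧ cnt 0 f = r) := by
  unfold cls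
  split_ifs <;> simp_all <;> omega

lemma cls_five {r : ℕ} {f : Fin d → Fin 4} (h5 : cls r f = 5) (hr : r ≤ d) :
    d - r + 2 ≤ W f ∧ 1 ≤ d := by
  unfold cls at h5
  split_ifs at h5 with a b c e g
  · exact absurd h5 (by decide)
  · exact absurd h5 (by decide)
  · exact absurd h5 (by decide)
  · exact absurd h5 (by decide)
  · exact absurd h5 (by decide)
  · have hw := W_eq f
    have hs := cnt_sum f
    omega

lemma bound_class4 (A B C D : Matrix (Fin d) (Fin d) ℝ) {h : ℝ} (h0 : 0 < h) {r : ℕ}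
    {f : Fin d → Fin 4} (hc2 : cnt 2 f = 0) (hc3 : cnt 3 f = 1) (hc0 : cnt 0 f = r) :
    |h ^ W f * (G A B C D f).det|
      ≤ h ^ (d - r + 1) * ((d.factorial : ℝ)
          * (frob A + frob B + frob C + frob D) ^ (d - 1) * frob D) := by
  have hs := cnt_sum f
  have hW : W f = d - r + 1 := by have := W_eq f; omega
  obtain ⟨k, hk⟩ := Finset.card_eq_one.mp hc3
  have hb : ∀ i j, |G A B C D f i j|
      ≤ (fun j => if f j = 3 then frob D else frob A + frob B + frob C + frob D) j := by
    intro i j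
    show |G A B C D f i j| ≤ if f j = 3 then frob D else frob A + frob B + frob C + frob D
    by_cases hj : f j = 3
    · have hGv : G A B C D f i j = D i j := by simp [G, pick, hj]
      rw [if_pos hj, hGv]
      exact abs_entry_le_frob D i j
    · rw [if_neg hj]
      exact entry_bound A B C D f i j
  have hdet := abs_det_le (G A B C D f) _ hb
  have hp1 : ∏ j ∈ Finset.univ.filter (fun j => f j = 3),
      (if f j = 3 then frob D else frob A + frob B + frob C + frob D) = frob D := by
    rw [hk, Finset.prod_singleton, if_pos]
    have hkm : k ∈ Finset.univ.filter (fun j => f j = 3) := by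
      rw [hk]; exact Finset.mem_singleton_self k
    exact (Finset.mem_filter.mp hkm).2
  have hp2 : ∏ j ∈ Finset.univ.filter (fun j => ¬ f j = 3),
      (if f j = 3 then frob D else frob A + frob B + frob C + frob D)
      = (frob A + frob B + frob C + frob D) ^ (d - 1) := by
    rw [Finset.prod_congr rfl (fun j hj => if_neg (Finset.mem_filter.mp hj).2),
      Finset.prod_const]
    congr 1
    have hcc := Finset.card_filter_add_card_filter_not
      (s := (Finset.univ : Finset (Fin d))) (fun j => f j = 3)
    rw [Finset.card_univ, Fintype.card_fin] at hcc
    have hone : (Finset.univ.filter (fun j => f j = 3)).card = 1 := hc3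
    omega
  have hprod : (∏ j, (if f j = 3 then frob D else frob A + frob B + frob C + frob D))
      = frob D * (frob A + frob B + frob C + frob D) ^ (d - 1) := by
    rw [← Finset.prod_filter_mul_prod_filter_not Finset.univ (fun j => f j = 3), hp1, hp2]
  rw [hprod] at hdet
  rw [abs_mul, abs_pow, abs_of_pos h0, hW]
  apply mul_le_mul_of_nonneg_left _ (pow_nonneg h0.le _)
  calc |(G A B C D f).det|
      ≤ (d.factorial : ℝ) * (frob D * (frob A + frob B + frob C + frob D) ^ (d - 1)) := hdet
    _ = (d.factorial : ℝ) * (frob A + frob B + frob C + frob D) ^ (d - 1) * frob D := by ring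

lemma bound_class5 (A B C D : Matrix (Fin d) (Fin d) ℝ) {h : ℝ} (h0 : 0 < h) (h1 : h ≤ 1)
    {r : ℕ} {f : Fin d → Fin 4} (hW2 : d - r + 2 ≤ W f) (hd : 1 ≤ d) :
    |h ^ W f * (G A B C D f).det|
      ≤ h ^ (d - r + 1) * ((d.factorial : ℝ)
          * (frob A + frob B + frob C + frob D) ^ (d - 1)
          * (h * (frob A + frob B + frob C + frob D))) := by
  have hL0 : 0 ≤ frob A + frob B + frob C + frob D := by
    have := frob_nonneg A; have := frob_nonneg B; have := frob_nonneg C; have := frob_nonneg D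
    linarith
  have hdet := abs_det_le (G A B C D f) (fun _ => frob A + frob B + frob C + frob D)
    (fun i j => entry_bound A B C D f i j)
  rw [Finset.prod_const, Finset.card_univ, Fintype.card_fin] at hdet
  rw [abs_mul, abs_pow, abs_of_pos h0]
  have hpow : h ^ W f ≤ h ^ (d - r + 2) := pow_le_pow_of_le_one h0.le h1 hW2
  calc h ^ W f * |(G A B C D f).det|
      ≤ h ^ (d - r + 2) * ((d.factorial : ℝ) * (frob A + frob B + frob C + frob D) ^ d) := by
        apply mul_le_mul hpow hdet (abs_nonneg _) (pow_nonneg h0.le _)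
    _ = h ^ (d - r + 1) * ((d.factorial : ℝ)
          * (frob A + frob B + frob C + frob D) ^ (d - 1)
          * (h * (frob A + frob B + frob C + frob D))) := by
        have e1 : d - r + 2 = (d - r + 1) + 1 := by omega
        have e3 : (frob A + frob B + frob C + frob D) ^ d
            = (frob A + frob B + frob C + frob D) ^ (d - 1)
              * (frob A + frob B + frob C + frob D) := by
          rw [← pow_succ]
          congr 1
          omega
        rw [e1, pow_succ, e3]
        ring

end DetExp

theorem det_second_order_expansion (d : ℕ) :
    ∃ K > (0:ℝ), ∀ r ≤ d, ∀ h ∈ Set.Ioc (0:ℝ) 1,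
      ∀ A B C D : Matrix (Fin d) (Fin d) ℝ, A.rank ≤ r →
        |(A + h • B + (h ^ 2) • C + (h ^ 2) • D).det
            - h ^ (d - r) * gammaR r A B
            - h ^ (d - r + 1) * (gammaPred r A B + gamma' r A B C)|
          ≤ K * h ^ (d - r + 1)
              * (frob A + frob B + frob C + frob D) ^ (d - 1)
              * (h * (frob A + frob B + frob C + frob D) + frob D) := by
  classical
  refine ⟨(4:ℝ) ^ d * (d.factorial : ℝ), by positivity, ?_⟩
  intro r hr h hh A B C D hrank
  obtain ⟨h0, h1⟩ := hh
  have nA := DetExp.frob_nonneg A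
  have nB := DetExp.frob_nonneg B
  have nC := DetExp.frob_nonneg C
  have nD := DetExp.frob_nonneg D
  have hL0 : 0 ≤ frob A + frob B + frob C + frob D := by linarith
  rw [DetExp.det_expand A B C D h,
    ← Finset.sum_fiberwise Finset.univ (DetExp.cls r)
      (fun f => h ^ DetExp.W f * (DetExp.G A B C D f).det),
    Fin.sum_univ_six]
  have e0 : ∑ f ∈ Finset.univ.filter (fun f : Fin d → Fin 4 => DetExp.cls r f = 0),
      h ^ DetExp.W f * (DetExp.G A B C D f).det = 0 := by
    rw [Finset.filter_congr (fun f _ => DetExp.cls_iff0)]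
    exact DetExp.sum_class0 A B C D h r hrank
  have e1 : ∑ f ∈ Finset.univ.filter (fun f : Fin d → Fin 4 => DetExp.cls r f = 1),
      h ^ DetExp.W f * (DetExp.G A B C D f).det = h ^ (d - r) * gammaR r A B := by
    rw [Finset.filter_congr (fun f _ => DetExp.cls_iff1)]
    exact DetExp.sum_class1 A B C D h r
  have e2 : ∑ f ∈ Finset.univ.filter (fun f : Fin d → Fin 4 => DetExp.cls r f = 2),
      h ^ DetExp.W f * (DetExp.G A B C D f).det = h ^ (d - r + 1) * gammaPred r A B := by
    rw [Finset.filter_congr (fun f _ => DetExp.cls_iff2)]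
    exact DetExp.sum_class2 A B C D h r hr
  have e3 : ∑ f ∈ Finset.univ.filter (fun f : Fin d → Fin 4 => DetExp.cls r f = 3),
      h ^ DetExp.W f * (DetExp.G A B C D f).det = h ^ (d - r + 1) * gamma' r A B C := by
    rw [Finset.filter_congr (fun f _ => DetExp.cls_iff3)]
    exact DetExp.sum_class3 A B C D h r
  rw [e0, e1, e2, e3]
  set S4 := ∑ f ∈ Finset.univ.filter (fun f : Fin d → Fin 4 => DetExp.cls r f = 4),
      h ^ DetExp.W f * (DetExp.G A B C D f).det with hS4
  set S5 := ∑ f ∈ Finset.univ.filter (fun f : Fin d → Fin 4 => DetExp.cls r f = 5),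
      h ^ DetExp.W f * (DetExp.G A B C D f).det with hS5
  have hinner : 0 + h ^ (d - r) * gammaR r A B + h ^ (d - r + 1) * gammaPred r A B
      + h ^ (d - r + 1) * gamma' r A B C + S4 + S5
      - h ^ (d - r) * gammaR r A B
      - h ^ (d - r + 1) * (gammaPred r A B + gamma' r A B C) = S4 + S5 := by ring
  rw [hinner]
  have hcard : ∀ p : (Fin d → Fin 4) → Prop, ∀ ( _ : DecidablePred p),
      ((Finset.univ.filter p).card : ℝ) ≤ (4:ℝ) ^ d := by
    intro p hp
    have hle := Finset.card_filter_le (Finset.univ : Finset (Fin d → Fin 4)) p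
    rw [Finset.card_univ, Fintype.card_fun, Fintype.card_fin, Fintype.card_fin] at hle
    calc ((Finset.univ.filter p).card : ℝ) ≤ ((4 ^ d : ℕ) : ℝ) := Nat.cast_le.mpr hle
      _ = (4:ℝ) ^ d := by push_cast; ring
  have hbnn4 : 0 ≤ h ^ (d - r + 1) * ((d.factorial : ℝ)
      * (frob A + frob B + frob C + frob D) ^ (d - 1) * frob D) :=
    mul_nonneg (pow_nonneg h0.le _)
      (mul_nonneg (mul_nonneg (Nat.cast_nonneg _) (pow_nonneg hL0 _)) nD)
  have hbnn5 : 0 ≤ h ^ (d - r + 1) * ((d.factorial : ℝ)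
      * (frob A + frob B + frob C + frob D) ^ (d - 1)
      * (h * (frob A + frob B + frob C + frob D))) :=
    mul_nonneg (pow_nonneg h0.le _)
      (mul_nonneg (mul_nonneg (Nat.cast_nonneg _) (pow_nonneg hL0 _))
        (mul_nonneg h0.le hL0))
  have hb4 : |S4| ≤ (4:ℝ) ^ d * (h ^ (d - r + 1) * ((d.factorial : ℝ)
      * (frob A + frob B + frob C + frob D) ^ (d - 1) * frob D)) := by
    rw [hS4]
    calc |∑ f ∈ Finset.univ.filter (fun f : Fin d → Fin 4 => DetExp.cls r f = 4),
        h ^ DetExp.W f * (DetExp.G A B C D f).det|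
        ≤ ∑ f ∈ Finset.univ.filter (fun f : Fin d → Fin 4 => DetExp.cls r f = 4),
            |h ^ DetExp.W f * (DetExp.G A B C D f).det| := Finset.abs_sum_le_sum_abs _ _
      _ ≤ ∑ _f ∈ Finset.univ.filter (fun f : Fin d → Fin 4 => DetExp.cls r f = 4),
            (h ^ (d - r + 1) * ((d.factorial : ℝ)
              * (frob A + frob B + frob C + frob D) ^ (d - 1) * frob D)) := by
          apply Finset.sum_le_sum
          intro f hf
          obtain ⟨a, b, c⟩ := DetExp.cls_iff4.mp (Finset.mem_filter.mp hf).2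
          exact DetExp.bound_class4 A B C D h0 a b c
      _ ≤ (4:ℝ) ^ d * (h ^ (d - r + 1) * ((d.factorial : ℝ)
            * (frob A + frob B + frob C + frob D) ^ (d - 1) * frob D)) := by
          rw [Finset.sum_const, nsmul_eq_mul]
          exact mul_le_mul_of_nonneg_right (hcard _ _) hbnn4
  have hb5 : |S5| ≤ (4:ℝ) ^ d * (h ^ (d - r + 1) * ((d.factorial : ℝ)
      * (frob A + frob B + frob C + frob D) ^ (d - 1)
      * (h * (frob A + frob B + frob C + frob D)))) := by
    rw [hS5]
    calc |∑ f ∈ Finset.univ.filter (fun f : Fin d → Fin 4 => DetExp.cls r f = 5),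
        h ^ DetExp.W f * (DetExp.G A B C D f).det|
        ≤ ∑ f ∈ Finset.univ.filter (fun f : Fin d → Fin 4 => DetExp.cls r f = 5),
            |h ^ DetExp.W f * (DetExp.G A B C D f).det| := Finset.abs_sum_le_sum_abs _ _
      _ ≤ ∑ _f ∈ Finset.univ.filter (fun f : Fin d → Fin 4 => DetExp.cls r f = 5),
            (h ^ (d - r + 1) * ((d.factorial : ℝ)
              * (frob A + frob B + frob C + frob D) ^ (d - 1)
              * (h * (frob A + frob B + frob C + frob D)))) := by
          apply Finset.sum_le_sum
          intro f hf
          obtain ⟨hW2, hd⟩ := DetExp.cls_five (Finset.mem_filter.mp hf).2 hr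
          exact DetExp.bound_class5 A B C D h0 h1 hW2 hd
      _ ≤ (4:ℝ) ^ d * (h ^ (d - r + 1) * ((d.factorial : ℝ)
            * (frob A + frob B + frob C + frob D) ^ (d - 1)
            * (h * (frob A + frob B + frob C + frob D)))) := by
          rw [Finset.sum_const, nsmul_eq_mul]
          exact mul_le_mul_of_nonneg_right (hcard _ _) hbnn5
  calc |S4 + S5| ≤ |S4| + |S5| := abs_add_le _ _
    _ ≤ (4:ℝ) ^ d * (h ^ (d - r + 1) * ((d.factorial : ℝ)
          * (frob A + frob B + frob C + frob D) ^ (d - 1) * frob D))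
        + (4:ℝ) ^ d * (h ^ (d - r + 1) * ((d.factorial : ℝ)
          * (frob A + frob B + frob C + frob D) ^ (d - 1)
          * (h * (frob A + frob B + frob C + frob D)))) := add_le_add hb4 hb5
    _ = (4:ℝ) ^ d * (d.factorial : ℝ) * h ^ (d - r + 1)
          * (frob A + frob B + frob C + frob D) ^ (d - 1)
          * (h * (frob A + frob B + frob C + frob D) + frob D) := by ring
end

section
/- There is a constant K = K(d) such that for all r ∈ {0,…,d}, h ∈ (0,1], and d×d matrices A,B,C,D with rank(A) ≤ r: |h^{-(2d-2r)} det(A+hB+h²C+h²D)² − γ_r(A,B)² − 2h γ_r(A,B)(γ_{r-1}(A,B)+γ'_r(A,B,C))| ≤ K h Λ^{2d-1}(hΛ + ‖D‖), where Λ = ‖A‖+‖B‖+‖C‖+‖D‖. -/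
open Finset Matrix

lemma abs_mul_le' {a b x y : ℝ} (h1 : |a| ≤ x) (h2 : |b| ≤ y) : |a * b| ≤ x * y := by
  rw [abs_mul]; exact mul_le_mul h1 h2 (abs_nonneg _) ((abs_nonneg a).trans h1)

lemma abs_sum_le_card_mul {α : Type*} (t : Finset α) (F : α → ℝ) (bnd : ℝ)
    (hf : ∀ σ ∈ t, |F σ| ≤ bnd) : |∑ σ ∈ t, F σ| ≤ t.card * bnd := by
  calc |∑ σ ∈ t, F σ| ≤ ∑ σ ∈ t, |F σ| := Finset.abs_sum_le_sum_abs _ _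
    _ ≤ t.card • bnd := Finset.sum_le_card_nsmul _ _ _ hf
    _ = t.card * bnd := nsmul_eq_mul _ _

variable {d : ℕ}

noncomputable def pick (A B E : Matrix (Fin d) (Fin d) ℝ) (σ : Fin d → Fin 3) :
    Matrix (Fin d) (Fin d) ℝ :=
  Matrix.of fun i j => if σ j = 0 then A i j else if σ j = 1 then B i j else E i j

lemma det_expand_s6 (x y : ℝ) (A B E : Matrix (Fin d) (Fin d) ℝ) :
    (A + x • B + y • E).det
      = ∑ σ : Fin d → Fin 3,
          (x ^ #(univ.filter fun j => σ j = 1) * y ^ #(univ.filter fun j => σ j = 2))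
            * (pick A B E σ).det := by
  classical
  set c : Fin 3 → ℝ := ![1, x, y] with hc
  set base : Fin d → Fin 3 → (Fin d → ℝ) :=
    fun j t => if t = 0 then Aᵀ j else if t = 1 then Bᵀ j else Eᵀ j with hbase
  have key : (A + x • B + y • E).det = ((A + x • B + y • E)ᵀ).det := (Matrix.det_transpose _).symm
  rw [key]
  have hrows : (A + x • B + y • E)ᵀ = fun j => ∑ t : Fin 3, c t • base j t := by
    funext j i
    simp [Fin.sum_univ_three, hc, hbase, Matrix.transpose_apply, Matrix.add_apply,
      Matrix.smul_apply]
  have hdet : ((A + x • B + y • E)ᵀ).det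
      = (Matrix.detRowAlternating : (Fin d → ℝ) [⋀^Fin d]→ₗ[ℝ] ℝ)
          (fun j => ∑ t : Fin 3, c t • base j t) := by rw [← hrows]; rfl
  have hms : (Matrix.detRowAlternating : (Fin d → ℝ) [⋀^Fin d]→ₗ[ℝ] ℝ)
        (fun j => ∑ t : Fin 3, c t • base j t)
      = ∑ σ : Fin d → Fin 3, (Matrix.detRowAlternating : (Fin d → ℝ) [⋀^Fin d]→ₗ[ℝ] ℝ)
          (fun j => c (σ j) • base j (σ j)) :=
    (Matrix.detRowAlternating : (Fin d → ℝ) [⋀^Fin d]→ₗ[ℝ] ℝ).toMultilinearMap.map_sum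
      (g := fun j t => c t • base j t)
  rw [hdet, hms]
  refine Finset.sum_congr rfl fun σ _ => ?_
  have h1 : (Matrix.detRowAlternating : (Fin d → ℝ) [⋀^Fin d]→ₗ[ℝ] ℝ)
        (fun j => c (σ j) • base j (σ j))
      = (∏ j, c (σ j)) • (Matrix.detRowAlternating : (Fin d → ℝ) [⋀^Fin d]→ₗ[ℝ] ℝ)
          (fun j => base j (σ j)) :=
    (Matrix.detRowAlternating : (Fin d → ℝ) [⋀^Fin d]→ₗ[ℝ] ℝ).toMultilinearMap.map_smul_univ
      (fun j => c (σ j)) (fun j => base j (σ j))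
  have h2 : (fun j => base j (σ j)) = (pick A B E σ)ᵀ := by
    funext j i
    simp only [hbase, Matrix.transpose_apply, pick, Matrix.of_apply]
    split <;> [rfl; (split <;> rfl)]
  have h3 : (Matrix.detRowAlternating : (Fin d → ℝ) [⋀^Fin d]→ₗ[ℝ] ℝ)
      (fun j => base j (σ j)) = (pick A B E σ).det := by
    rw [h2]; exact Matrix.det_transpose _
  have h4 : (∏ j, c (σ j))
      = x ^ #(univ.filter fun j => σ j = 1) * y ^ #(univ.filter fun j => σ j = 2) := by
    have := Finset.prod_fiberwise_of_maps_to (s := (univ : Finset (Fin d)))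
      (t := (univ : Finset (Fin 3))) (g := σ) (fun j _ => mem_univ _) (fun j => c (σ j))
    rw [← this]
    have inner : ∀ t : Fin 3, ∏ j ∈ univ.filter (fun j => σ j = t), c (σ j)
        = c t ^ #(univ.filter fun j => σ j = t) := by
      intro t
      rw [Finset.prod_congr rfl (fun j hj => by rw [(Finset.mem_filter.mp hj).2]),
        Finset.prod_const]
    rw [Fin.prod_univ_three]
    simp only [inner]
    simp [hc]
  calc (Matrix.detRowAlternating : (Fin d → ℝ) [⋀^Fin d]→ₗ[ℝ] ℝ)
        (fun j => c (σ j) • base j (σ j))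
      = (∏ j, c (σ j)) • (pick A B E σ).det := by rw [h1, h3]
    _ = _ := by rw [h4, smul_eq_mul]


lemma det_pick_eq_zero {r : ℕ} {A : Matrix (Fin d) (Fin d) ℝ} (hA : A.rank ≤ r)
    (B E : Matrix (Fin d) (Fin d) ℝ) (σ : Fin d → Fin 3)
    (hσ : r < #(univ.filter fun j => σ j = 0)) :
    (pick A B E σ).det = 0 := by
  classical
  set S := univ.filter (fun j => σ j = 0) with hS
  set W := Submodule.span ℝ (Set.range Aᵀ) with hW
  have hfin : Module.finrank ℝ W ≤ r := by
    rw [Matrix.rank_eq_finrank_span_cols] at hA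
    exact hA
  have hmem : ∀ s : {x // x ∈ S}, Aᵀ (s : Fin d) ∈ W :=
    fun s => Submodule.subset_span ⟨s, rfl⟩
  have hnotli : ¬ LinearIndependent ℝ (fun s : {x // x ∈ S} => Aᵀ (s : Fin d)) := by
    intro hli
    have hli' : LinearIndependent ℝ (fun s : {x // x ∈ S} => (⟨Aᵀ s, hmem s⟩ : W)) := by
      apply LinearIndependent.of_comp W.subtype
      convert hli
      rfl
    have := hli'.fintype_card_le_finrank
    rw [Fintype.card_coe] at this
    omega
  obtain ⟨g, hg0, i₀, hi₀⟩ := Fintype.not_linearIndependent_iff.mp hnotli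
  set w : Fin d → ℝ := fun j => if hj : j ∈ S then g ⟨j, hj⟩ else 0 with hw
  have hwne : w ≠ 0 := by
    intro h
    apply hi₀
    have h2 : w ↑i₀ = 0 := congrFun h i₀
    simpa only [hw, dif_pos i₀.2, Subtype.coe_eta] using h2
  have hmul : (pick A B E σ).mulVec w = 0 := by
    funext i
    have : (pick A B E σ).mulVec w i = ∑ j, (pick A B E σ) i j * w j := rfl
    rw [this]
    have hout : ∀ j ∈ univ, j ∉ S → (pick A B E σ) i j * w j = 0 := by
      intro j _ hj
      rw [hw]; simp [dif_neg hj]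
    rw [← Finset.sum_subset (Finset.subset_univ S) (fun j _ hj => hout j (mem_univ j) hj)]
    rw [← Finset.sum_attach S (fun j => (pick A B E σ) i j * w j)]
    have : ∀ s : {x // x ∈ S}, (pick A B E σ) i (s : Fin d) * w (s : Fin d)
        = g s * A i (s : Fin d) := by
      intro s
      have hs0 : σ (s : Fin d) = 0 := (Finset.mem_filter.mp s.2).2
      rw [hw]
      simp only [pick, Matrix.of_apply, hs0, if_pos rfl, dif_pos s.2, if_true,
        Subtype.coe_eta]
      ring
    rw [Finset.sum_congr rfl (fun s _ => this s)]
    have := congrFun hg0 i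
    simpa [Matrix.transpose_apply] using this
  exact Matrix.exists_mulVec_eq_zero_iff.mp ⟨w, hwne, hmul⟩


lemma fin3_eq_one {t : Fin 3} (h0 : t ≠ 0) (h2 : t ≠ 2) : t = 1 := by
  fin_cases t <;> simp_all

lemma sum_pick_eq_gammaR (A B E : Matrix (Fin d) (Fin d) ℝ) (m : ℕ) :
    ∑ σ ∈ univ.filter (fun σ : Fin d → Fin 3 =>
        #(univ.filter fun j => σ j = 0) = m ∧ #(univ.filter fun j => σ j = 2) = 0),
      (pick A B E σ).det = gammaR m A B := by
  classical
  rw [gammaR]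
  refine Finset.sum_bij' (i := fun σ _ => univ.filter fun j => σ j = 0)
    (j := fun I _ => fun j => if j ∈ I then (0 : Fin 3) else 1) ?_ ?_ ?_ ?_ ?_
  · intro σ hσ
    rw [Finset.mem_filter] at hσ
    rw [Finset.mem_powersetCard_univ]
    exact hσ.2.1
  · intro I hI
    rw [Finset.mem_powersetCard_univ] at hI
    have e1 : (univ.filter fun j => (if j ∈ I then (0:Fin 3) else 1) = 0) = I := by
      ext j; by_cases h : j ∈ I <;> simp [h]
    have e2 : (univ.filter fun j => (if j ∈ I then (0:Fin 3) else 1) = 2) = ∅ := by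
      ext j; by_cases h : j ∈ I <;> simp [h]
    rw [Finset.mem_filter]
    refine ⟨mem_univ _, ?_, ?_⟩
    · show #(univ.filter fun j => (if j ∈ I then (0:Fin 3) else 1) = 0) = m
      rw [e1, hI]
    · show #(univ.filter fun j => (if j ∈ I then (0:Fin 3) else 1) = 2) = 0
      rw [e2]; rfl
  · intro σ hσ
    rw [Finset.mem_filter] at hσ
    have h2 : ∀ j, σ j ≠ 2 := by
      intro j hj
      have : j ∈ univ.filter fun j => σ j = 2 := by simp [hj]
      rw [Finset.card_eq_zero.mp hσ.2.2] at this
      exact absurd this (Finset.notMem_empty j)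
    funext j
    show (if j ∈ univ.filter (fun j => σ j = 0) then (0:Fin 3) else 1) = σ j
    simp only [Finset.mem_filter, mem_univ, true_and]
    by_cases h : σ j = 0
    · rw [if_pos h, h]
    · rw [if_neg h, fin3_eq_one h (h2 j)]
  · intro I hI
    ext j; simp
  · intro σ hσ
    rw [Finset.mem_filter] at hσ
    have h2 : ∀ j, σ j ≠ 2 := by
      intro j hj
      have : j ∈ univ.filter fun j => σ j = 2 := by simp [hj]
      rw [Finset.card_eq_zero.mp hσ.2.2] at this
      exact absurd this (Finset.notMem_empty j)
    congr 1
    funext i j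
    by_cases h : σ j = 0
    · simp [pick, colMix, h]
    · have h1 : σ j = 1 := fin3_eq_one h (h2 j)
      simp [pick, colMix, h, h1]

lemma sum_pick_eq_gamma' (A B E : Matrix (Fin d) (Fin d) ℝ) (r : ℕ) :
    ∑ σ ∈ univ.filter (fun σ : Fin d → Fin 3 =>
        #(univ.filter fun j => σ j = 0) = r ∧ #(univ.filter fun j => σ j = 2) = 1),
      (pick A B E σ).det = gamma' r A B E := by
  classical
  rw [gamma', Finset.sum_sigma']
  refine Finset.sum_bij'
    (i := fun σ hσ => ⟨univ.filter fun j => σ j = 0,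
      (univ.filter fun j => σ j = 2).min' (by
        rw [Finset.mem_filter] at hσ
        exact Finset.card_pos.mp (by omega))⟩)
    (j := fun p _ => fun j => if j ∈ p.1 then (0 : Fin 3) else if j = p.2 then 2 else 1)
    ?_ ?_ ?_ ?_ ?_
  · intro σ hσ
    rw [Finset.mem_filter] at hσ
    obtain ⟨k, hk⟩ := Finset.card_eq_one.mp hσ.2.2
    have hmin : ∀ hne, (univ.filter fun j => σ j = 2).min' hne = k := by
      intro hne
      have := Finset.min'_mem _ hne
      exact Finset.mem_singleton.mp ((Finset.ext_iff.mp hk _).mp this)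
    have hσk : σ k = 2 := by
      have : k ∈ univ.filter fun j => σ j = 2 := by rw [hk]; simp
      exact (Finset.mem_filter.mp this).2
    rw [Finset.mem_sigma]
    constructor
    · rw [Finset.mem_powersetCard_univ]; exact hσ.2.1
    · have hne : (univ.filter fun j => σ j = 2).Nonempty :=
        ⟨k, (Finset.ext_iff.mp hk k).mpr (Finset.mem_singleton_self k)⟩
      show (univ.filter fun j => σ j = 2).min' hne ∈ (univ.filter fun j => σ j = 0)ᶜ
      rw [hmin, Finset.mem_compl, Finset.mem_filter]
      intro hcon
      rw [hcon.2] at hσk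
      exact absurd hσk (by decide)
  · intro p hp
    rw [Finset.mem_sigma, Finset.mem_powersetCard_univ, Finset.mem_compl] at hp
    have hk1 : p.2 ∉ p.1 := hp.2
    rw [Finset.mem_filter]
    have e1 : (univ.filter fun j =>
        (if j ∈ p.1 then (0:Fin 3) else if j = p.2 then 2 else 1) = 0) = p.1 := by
      ext j; by_cases h : j ∈ p.1
      · simp [h]
      · by_cases h2 : j = p.2 <;> simp [h, h2, hk1]
    have e2 : (univ.filter fun j =>
        (if j ∈ p.1 then (0:Fin 3) else if j = p.2 then 2 else 1) = 2) = {p.2} := by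
      ext j; by_cases h : j ∈ p.1
      · have : j ≠ p.2 := fun hc => hk1 (hc ▸ h)
        simp [h, this]
      · by_cases h2 : j = p.2 <;> simp [h, h2, hk1]
    refine ⟨mem_univ _, ?_, ?_⟩
    · show #(univ.filter fun j =>
        (if j ∈ p.1 then (0:Fin 3) else if j = p.2 then 2 else 1) = 0) = r
      rw [e1, hp.1]
    · show #(univ.filter fun j =>
        (if j ∈ p.1 then (0:Fin 3) else if j = p.2 then 2 else 1) = 2) = 1
      rw [e2]; rfl
  · intro σ hσ'
    rw [Finset.mem_filter] at hσ'
    obtain ⟨k, hk⟩ := Finset.card_eq_one.mp hσ'.2.2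
    have hne : (univ.filter fun j => σ j = 2).Nonempty :=
      ⟨k, (Finset.ext_iff.mp hk k).mpr (Finset.mem_singleton_self k)⟩
    have hmin : (univ.filter fun j => σ j = 2).min' hne = k := by
      have := Finset.min'_mem _ hne
      exact Finset.mem_singleton.mp ((Finset.ext_iff.mp hk _).mp this)
    have hmem2 : ∀ j, σ j = 2 ↔ j = k := by
      intro j
      constructor
      · intro hj
        exact Finset.mem_singleton.mp ((Finset.ext_iff.mp hk j).mp (by simp [hj]))
      · intro hj
        have : k ∈ univ.filter fun j => σ j = 2 :=
          (Finset.ext_iff.mp hk k).mpr (Finset.mem_singleton_self k)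
        rw [hj]; exact (Finset.mem_filter.mp this).2
    funext j
    show (if j ∈ univ.filter (fun j => σ j = 0) then (0:Fin 3)
        else if j = (univ.filter fun j => σ j = 2).min' hne then 2 else 1) = σ j
    rw [hmin]
    simp only [Finset.mem_filter, mem_univ, true_and]
    by_cases h0 : σ j = 0
    · rw [if_pos h0, h0]
    · rw [if_neg h0]
      by_cases h2 : σ j = 2
      · rw [if_pos ((hmem2 j).mp h2), h2]
      · rw [if_neg (fun hc => h2 ((hmem2 j).mpr hc)), fin3_eq_one h0 h2]
  · intro p hp
    rw [Finset.mem_sigma, Finset.mem_powersetCard_univ, Finset.mem_compl] at hp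
    have hk1 : p.2 ∉ p.1 := hp.2
    have e1 : (univ.filter fun j =>
        (if j ∈ p.1 then (0:Fin 3) else if j = p.2 then 2 else 1) = 0) = p.1 := by
      ext j; by_cases h : j ∈ p.1
      · simp [h]
      · by_cases h2 : j = p.2 <;> simp [h, h2, hk1]
    have e2 : (univ.filter fun j =>
        (if j ∈ p.1 then (0:Fin 3) else if j = p.2 then 2 else 1) = 2) = {p.2} := by
      ext j; by_cases h : j ∈ p.1
      · have : j ≠ p.2 := fun hc => hk1 (hc ▸ h)
        simp [h, this]
      · by_cases h2 : j = p.2 <;> simp [h, h2, hk1]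
    have hne : (univ.filter fun j =>
        (if j ∈ p.1 then (0:Fin 3) else if j = p.2 then 2 else 1) = 2).Nonempty :=
      ⟨p.2, (Finset.ext_iff.mp e2 p.2).mpr (Finset.mem_singleton_self p.2)⟩
    have hmin : (univ.filter fun j =>
        (if j ∈ p.1 then (0:Fin 3) else if j = p.2 then 2 else 1) = 2).min' hne = p.2 := by
      have := Finset.min'_mem _ hne
      exact Finset.mem_singleton.mp ((Finset.ext_iff.mp e2 _).mp this)
    show (⟨univ.filter fun j =>
        (if j ∈ p.1 then (0:Fin 3) else if j = p.2 then 2 else 1) = 0,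
        (univ.filter fun j =>
        (if j ∈ p.1 then (0:Fin 3) else if j = p.2 then 2 else 1) = 2).min' hne⟩
        : (_ : Finset (Fin d)) × Fin d) = p
    obtain ⟨I, k⟩ := p
    exact Sigma.ext e1 (heq_of_eq hmin)
  · intro σ hσ'
    rw [Finset.mem_filter] at hσ'
    obtain ⟨k, hk⟩ := Finset.card_eq_one.mp hσ'.2.2
    have hne : (univ.filter fun j => σ j = 2).Nonempty :=
      ⟨k, (Finset.ext_iff.mp hk k).mpr (Finset.mem_singleton_self k)⟩
    have hmin : (univ.filter fun j => σ j = 2).min' hne = k := by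
      have := Finset.min'_mem _ hne
      exact Finset.mem_singleton.mp ((Finset.ext_iff.mp hk _).mp this)
    have hmem2 : ∀ j, σ j = 2 ↔ j = k := by
      intro j
      constructor
      · intro hj
        exact Finset.mem_singleton.mp ((Finset.ext_iff.mp hk j).mp (by simp [hj]))
      · intro hj
        have : k ∈ univ.filter fun j => σ j = 2 :=
          (Finset.ext_iff.mp hk k).mpr (Finset.mem_singleton_self k)
        rw [hj]; exact (Finset.mem_filter.mp this).2
    show (pick A B E σ).det = Matrix.det (Matrix.of fun i j =>
        if j ∈ univ.filter (fun j => σ j = 0) then A i j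
        else if j = (univ.filter fun j => σ j = 2).min' hne then E i j else B i j)
    rw [hmin]
    congr 1
    funext i j
    simp only [pick, Matrix.of_apply, Finset.mem_filter, mem_univ, true_and]
    by_cases h0 : σ j = 0
    · simp [h0]
    · rw [if_neg h0, if_neg h0]
      by_cases h2 : σ j = 2
      · rw [if_neg (by rw [h2]; decide), if_pos ((hmem2 j).mp h2)]
      · rw [if_pos (fin3_eq_one h0 h2), if_neg (fun hc => h2 ((hmem2 j).mpr hc))]


lemma gammaAux_rep (A B X : Matrix (Fin d) (Fin d) ℝ) (I : Finset (Fin d)) (k : Fin d)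
    (hk : k ∉ I) :
    (Matrix.of fun i j => if j ∈ I then A i j else if j = k then X i j else B i j)
      = Matrix.updateCol (colMix A B I) k (fun i => X i k) := by
  funext i j
  rw [Matrix.updateCol_apply]
  by_cases hj : j = k
  · subst hj
    simp [hk]
  · simp [colMix, hj]

lemma gamma'_add (r : ℕ) (A B C D : Matrix (Fin d) (Fin d) ℝ) :
    gamma' r A B (C + D) = gamma' r A B C + gamma' r A B D := by
  rw [gamma', gamma', gamma', ← Finset.sum_add_distrib]
  refine Finset.sum_congr rfl fun I _ => ?_
  rw [← Finset.sum_add_distrib]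
  refine Finset.sum_congr rfl fun k hk => ?_
  have hkI : k ∉ I := Finset.mem_compl.mp hk
  rw [gammaAux_rep A B (C + D) I k hkI, gammaAux_rep A B C I k hkI,
    gammaAux_rep A B D I k hkI]
  have : (fun i => (C + D) i k) = (fun i => C i k) + (fun i => D i k) := rfl
  rw [this, Matrix.det_updateCol_add]

lemma frob_nonneg (A : Matrix (Fin d) (Fin d) ℝ) : 0 ≤ frob A := Real.sqrt_nonneg _

lemma abs_entry_le_frob (A : Matrix (Fin d) (Fin d) ℝ) (i j : Fin d) : |A i j| ≤ frob A := by
  rw [frob, ← Real.sqrt_sq_eq_abs]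
  apply Real.sqrt_le_sqrt
  calc A i j ^ 2 ≤ ∑ j', A i j' ^ 2 :=
        Finset.single_le_sum (f := fun j' => A i j' ^ 2) (fun j' _ => sq_nonneg _) (mem_univ j)
    _ ≤ ∑ i', ∑ j', A i' j' ^ 2 :=
        Finset.single_le_sum (f := fun i' => ∑ j', A i' j' ^ 2)
          (fun i' _ => Finset.sum_nonneg fun j' _ => sq_nonneg _) (mem_univ i)

lemma abs_det_le' {M : Matrix (Fin d) (Fin d) ℝ} {x : ℝ} (hx : ∀ i j, |M i j| ≤ x) :
    |M.det| ≤ (d.factorial : ℝ) * x ^ d := by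
  have := Matrix.det_le (A := M) (abv := AbsoluteValue.abs) hx
  simpa [Fintype.card_fin, nsmul_eq_mul] using this

lemma abs_det_le_col {M : Matrix (Fin d) (Fin d) ℝ} {x μ : ℝ} (hμ : 0 ≤ μ) (hx0 : 0 ≤ x)
    (k : Fin d) (hcol : ∀ i, |M i k| ≤ μ) (hx : ∀ i j, |M i j| ≤ x) :
    |M.det| ≤ (d.factorial : ℝ) * (μ * x ^ (d - 1)) := by
  rw [Matrix.det_apply]
  calc |∑ σ : Equiv.Perm (Fin d), Equiv.Perm.sign σ • ∏ i, M (σ i) i|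
      ≤ ∑ σ : Equiv.Perm (Fin d), |Equiv.Perm.sign σ • ∏ i, M (σ i) i| :=
        Finset.abs_sum_le_sum_abs _ _
    _ ≤ ∑ _σ : Equiv.Perm (Fin d), μ * x ^ (d - 1) := by
        refine Finset.sum_le_sum fun σ _ => ?_
        have habs : |Equiv.Perm.sign σ • ∏ i, M (σ i) i| = ∏ i, |M (σ i) i| := by
          rcases Int.units_eq_one_or (Equiv.Perm.sign σ) with h | h <;>
            simp [h, Units.smul_def, Finset.abs_prod]
        rw [habs]
        have hsplit : ∏ i, |M (σ i) i| = |M (σ k) k| * ∏ i ∈ univ.erase k, |M (σ i) i| :=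
          (Finset.mul_prod_erase univ (fun i => |M (σ i) i|) (mem_univ k)).symm
        rw [hsplit]
        have h1 : ∏ i ∈ univ.erase k, |M (σ i) i| ≤ x ^ (d - 1) := by
          calc ∏ i ∈ univ.erase k, |M (σ i) i| ≤ ∏ _i ∈ univ.erase k, x :=
                Finset.prod_le_prod (fun i _ => abs_nonneg _) (fun i _ => hx _ _)
            _ = x ^ (d - 1) := by
                rw [Finset.prod_const, Finset.card_erase_of_mem (mem_univ k),
                  Finset.card_univ, Fintype.card_fin]
        exact mul_le_mul (hcol _) h1 (Finset.prod_nonneg fun i _ => abs_nonneg _) hμ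
    _ = (d.factorial : ℝ) * (μ * x ^ (d - 1)) := by
        rw [Finset.sum_const, Finset.card_univ, Fintype.card_perm, Fintype.card_fin,
          nsmul_eq_mul]


set_option maxHeartbeats 1000000 in
theorem det_sq_second_order_expansion (d : ℕ) :
    ∃ K > (0:ℝ), ∀ r ≤ d, ∀ h ∈ Set.Ioc (0:ℝ) 1,
      ∀ A B C D : Matrix (Fin d) (Fin d) ℝ, A.rank ≤ r →
        |(A + h • B + (h ^ 2) • C + (h ^ 2) • D).det ^ 2 / h ^ (2 * d - 2 * r)
            - gammaR r A B ^ 2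
            - 2 * h * gammaR r A B * (gammaPred r A B + gamma' r A B C)|
          ≤ K * h * (frob A + frob B + frob C + frob D) ^ (2 * d - 1)
              * (h * (frob A + frob B + frob C + frob D) + frob D) := by
  classical
  have hCCpos : 0 < ((3^d * 2^d * (d+1) * d.factorial : ℕ) : ℝ) := by
    have : 0 < 3^d * 2^d * (d+1) * d.factorial :=
      Nat.mul_pos (Nat.mul_pos (Nat.mul_pos (pow_pos (by norm_num) d)
        (pow_pos (by norm_num) d)) (Nat.succ_pos d)) d.factorial_pos
    exact_mod_cast this
  set CC : ℝ := ((3^d * 2^d * (d+1) * d.factorial : ℕ) : ℝ) with hCCdef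
  refine ⟨18 * CC^2 + 1, by positivity, ?_⟩
  intro r hr h hh A B C D hrank
  obtain ⟨hh0, hh1⟩ := hh
  by_cases hd0 : d = 0
  · subst hd0
    have hr0 : r = 0 := Nat.le_zero.mp hr
    subst hr0
    have hfrob : ∀ X : Matrix (Fin 0) (Fin 0) ℝ, frob X = 0 := by
      intro X; simp [frob]
    have hgR : gammaR 0 A B = 1 := by
      simp [gammaR, colMix, Matrix.det_isEmpty]
    have hgP : gammaPred 0 A B = 0 := by simp [gammaPred]
    have hg' : gamma' 0 A B C = 0 := by
      simp [gamma']
    rw [hgR, hgP, hg', hfrob A, hfrob B, hfrob C, hfrob D]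
    simp [Matrix.det_isEmpty]
  -- main case : d ≥ 1
  have hd1 : 1 ≤ d := Nat.one_le_iff_ne_zero.mpr hd0
  set Λ : ℝ := frob A + frob B + frob C + frob D with hLam
  set E : Matrix (Fin d) (Fin d) ℝ := C + D with hEdef
  set n0 : (Fin d → Fin 3) → ℕ := fun σ => #(univ.filter fun j => σ j = 0) with hn0def
  set n2 : (Fin d → Fin 3) → ℕ := fun σ => #(univ.filter fun j => σ j = 2) with hn2def
  set ee : (Fin d → Fin 3) → ℕ := fun σ => (r - n0 σ) + n2 σ with heedef
  set SS : Finset (Fin d → Fin 3) := univ.filter (fun σ => n0 σ ≤ r) with hSSdef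
  have hpart : ∀ σ : Fin d → Fin 3,
      n0 σ + #(univ.filter fun j => σ j = 1) + n2 σ = d := by
    intro σ
    have hfib := Finset.card_eq_sum_card_fiberwise
      (s := (univ : Finset (Fin d))) (t := (univ : Finset (Fin 3))) (f := σ)
      (fun x _ => mem_univ (σ x))
    rw [Fin.sum_univ_three] at hfib
    simp only [Finset.card_univ, Fintype.card_fin] at hfib
    simp only [hn0def, hn2def]
    omega
  -- Step 1 : determinant expansion restricted to SS
  have hMrw : A + h • B + (h^2) • C + (h^2) • D = A + h • B + (h^2) • E := by
    rw [hEdef, smul_add, add_assoc]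
  have hvan : ∀ σ ∈ (univ : Finset (Fin d → Fin 3)),
      (h ^ #(univ.filter fun j => σ j = 1) * (h^2) ^ #(univ.filter fun j => σ j = 2))
        * (pick A B E σ).det ≠ 0 → n0 σ ≤ r := by
    intro σ _ hne
    by_contra hgt
    apply hne
    have : r < #(univ.filter fun j => σ j = 0) := by
      simp only [hn0def] at hgt; omega
    rw [det_pick_eq_zero hrank B E σ this, mul_zero]
  have hdet1 : (A + h • B + (h^2) • C + (h^2) • D).det
      = ∑ σ ∈ SS,
          (h ^ #(univ.filter fun j => σ j = 1) * (h^2) ^ #(univ.filter fun j => σ j = 2))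
            * (pick A B E σ).det := by
    rw [hMrw, det_expand_s6 h (h^2) A B E]
    have := Finset.sum_filter_of_ne (s := (univ : Finset (Fin d → Fin 3)))
      (p := fun σ => n0 σ ≤ r)
      (f := fun σ =>
        (h ^ #(univ.filter fun j => σ j = 1) * (h^2) ^ #(univ.filter fun j => σ j = 2))
          * (pick A B E σ).det) hvan
    rw [hSSdef, this]
  -- Step 2 : exponent normalisation
  set QQ : ℝ := ∑ σ ∈ SS, h ^ (ee σ) * (pick A B E σ).det with hQQdef
  have hdetQ : (A + h • B + (h^2) • C + (h^2) • D).det = h^(d-r) * QQ := by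
    rw [hdet1, hQQdef, Finset.mul_sum]
    refine Finset.sum_congr rfl fun σ hσ => ?_
    have hσ' : σ ∈ univ.filter (fun σ => n0 σ ≤ r) := by rwa [← hSSdef]
    have hn0r : n0 σ ≤ r := (Finset.mem_filter.mp hσ').2
    have hcard := hpart σ
    have hexpeq : #(univ.filter fun j => σ j = 1) + 2 * n2 σ = (d - r) + ee σ := by
      simp only [heedef]
      simp only [hn2def] at *
      omega
    calc (h ^ #(univ.filter fun j => σ j = 1) * (h^2) ^ #(univ.filter fun j => σ j = 2))
          * (pick A B E σ).det
        = h ^ (#(univ.filter fun j => σ j = 1) + 2 * n2 σ) * (pick A B E σ).det := by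
          rw [pow_add, pow_mul]
      _ = h ^ ((d - r) + ee σ) * (pick A B E σ).det := by rw [hexpeq]
      _ = h^(d-r) * (h ^ (ee σ) * (pick A B E σ).det) := by rw [pow_add]; ring
  -- Step 3 : rewrite the quotient
  have hLHS : (A + h • B + (h^2) • C + (h^2) • D).det ^ 2 / h ^ (2*d - 2*r) = QQ^2 := by
    rw [hdetQ, mul_pow, ← pow_mul]
    have h2d : (d - r) * 2 = 2*d - 2*r := by omega
    rw [h2d]
    exact mul_div_cancel_left₀ _ (pow_ne_zero _ (ne_of_gt hh0))
  -- Step 4 : decompose QQ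
  set g0 : ℝ := gammaR r A B with hg0def
  set u : ℝ := gammaPred r A B + gamma' r A B C with hudef
  set v : ℝ := gamma' r A B D with hvdef
  set Rm : ℝ := ∑ σ ∈ SS.filter (fun σ => 2 ≤ ee σ), h ^ (ee σ - 2) * (pick A B E σ).det
    with hRmdef
  have hQsplit : QQ = (∑ σ ∈ SS.filter (fun σ => ee σ = 0), h ^ ee σ * (pick A B E σ).det)
      + ((∑ σ ∈ SS.filter (fun σ => ee σ = 1), h ^ ee σ * (pick A B E σ).det)
      + (∑ σ ∈ SS.filter (fun σ => 2 ≤ ee σ), h ^ ee σ * (pick A B E σ).det)) := by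
    rw [hQQdef, ← Finset.sum_filter_add_sum_filter_not SS (fun σ => ee σ = 0)]
    congr 1
    rw [← Finset.sum_filter_add_sum_filter_not
      (SS.filter (fun σ => ¬ ee σ = 0)) (fun σ => ee σ = 1)]
    congr 1
    · apply Finset.sum_congr _ (fun _ _ => rfl)
      rw [Finset.filter_filter]
      exact Finset.filter_congr fun σ _ => by constructor <;> intro hx <;> omega
    · apply Finset.sum_congr _ (fun _ _ => rfl)
      rw [Finset.filter_filter]
      exact Finset.filter_congr fun σ _ => by constructor <;> intro hx <;> omega
  have hsum0 : ∑ σ ∈ SS.filter (fun σ => ee σ = 0), h ^ ee σ * (pick A B E σ).det = g0 := by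
    have hset : SS.filter (fun σ => ee σ = 0)
        = univ.filter (fun σ : Fin d → Fin 3 =>
            #(univ.filter fun j => σ j = 0) = r ∧ #(univ.filter fun j => σ j = 2) = 0) := by
      rw [hSSdef, Finset.filter_filter]
      refine Finset.filter_congr fun σ _ => ?_
      simp only [heedef, hn0def, hn2def]
      omega
    calc ∑ σ ∈ SS.filter (fun σ => ee σ = 0), h ^ ee σ * (pick A B E σ).det
        = ∑ σ ∈ SS.filter (fun σ => ee σ = 0), (pick A B E σ).det :=
          Finset.sum_congr rfl (fun σ hσ => by
            rw [(Finset.mem_filter.mp hσ).2, pow_zero, one_mul])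
      _ = g0 := by rw [hset, hg0def]; exact sum_pick_eq_gammaR A B E r
  have hsum1 : ∑ σ ∈ SS.filter (fun σ => ee σ = 1), h ^ ee σ * (pick A B E σ).det
      = h * (gammaPred r A B + gamma' r A B E) := by
    have hset1 : SS.filter (fun σ => ee σ = 1)
        = univ.filter (fun σ => (n0 σ + 1 = r ∧ n2 σ = 0) ∨ (n0 σ = r ∧ n2 σ = 1)) := by
      rw [hSSdef, Finset.filter_filter]
      refine Finset.filter_congr fun σ _ => ?_
      simp only [heedef]
      omega
    have hdisj : Disjoint
        (univ.filter (fun σ : Fin d → Fin 3 => n0 σ + 1 = r ∧ n2 σ = 0))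
        (univ.filter (fun σ : Fin d → Fin 3 => n0 σ = r ∧ n2 σ = 1)) := by
      rw [Finset.disjoint_left]
      intro σ h1 h2
      have p1 := (Finset.mem_filter.mp h1).2
      have p2 := (Finset.mem_filter.mp h2).2
      omega
    have hP1 : ∑ σ ∈ univ.filter (fun σ : Fin d → Fin 3 => n0 σ + 1 = r ∧ n2 σ = 0),
        (pick A B E σ).det = gammaPred r A B := by
      cases r with
      | zero =>
        have : (univ.filter (fun σ : Fin d → Fin 3 => n0 σ + 1 = 0 ∧ n2 σ = 0)) = ∅ :=
          Finset.filter_false_of_mem (fun σ _ => by omega)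
        rw [this]
        simp [gammaPred]
      | succ m =>
        have hEE : (univ.filter (fun σ : Fin d → Fin 3 => n0 σ + 1 = m + 1 ∧ n2 σ = 0))
            = univ.filter (fun σ : Fin d → Fin 3 =>
                #(univ.filter fun j => σ j = 0) = m ∧ #(univ.filter fun j => σ j = 2) = 0) := by
          refine Finset.filter_congr fun σ _ => ?_
          simp only [hn0def, hn2def]
          omega
        rw [hEE, sum_pick_eq_gammaR A B E m]
        simp [gammaPred]
    have hP2 : ∑ σ ∈ univ.filter (fun σ : Fin d → Fin 3 => n0 σ = r ∧ n2 σ = 1),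
        (pick A B E σ).det = gamma' r A B E := by
      have heq : (univ.filter (fun σ : Fin d → Fin 3 => n0 σ = r ∧ n2 σ = 1))
          = univ.filter (fun σ : Fin d → Fin 3 =>
              #(univ.filter fun j => σ j = 0) = r ∧ #(univ.filter fun j => σ j = 2) = 1) := by
        refine Finset.filter_congr fun σ _ => ?_
        simp only [hn0def, hn2def]
      rw [heq]
      exact sum_pick_eq_gamma' A B E r
    calc ∑ σ ∈ SS.filter (fun σ => ee σ = 1), h ^ ee σ * (pick A B E σ).det
        = ∑ σ ∈ SS.filter (fun σ => ee σ = 1), h * (pick A B E σ).det :=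
          Finset.sum_congr rfl (fun σ hσ => by
            rw [(Finset.mem_filter.mp hσ).2, pow_one])
      _ = h * ∑ σ ∈ SS.filter (fun σ => ee σ = 1), (pick A B E σ).det :=
          (Finset.mul_sum _ _ _).symm
      _ = h * (gammaPred r A B + gamma' r A B E) := by
          rw [hset1, Finset.filter_or, Finset.sum_union hdisj, hP1, hP2]
  have hsum2 : ∑ σ ∈ SS.filter (fun σ => 2 ≤ ee σ), h ^ ee σ * (pick A B E σ).det
      = h^2 * Rm := by
    rw [hRmdef, Finset.mul_sum]
    refine Finset.sum_congr rfl fun σ hσ => ?_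
    have h2e : 2 ≤ ee σ := (Finset.mem_filter.mp hσ).2
    conv_lhs => rw [show ee σ = 2 + (ee σ - 2) by omega, pow_add]
    ring
  have hgamE : gamma' r A B E = gamma' r A B C + gamma' r A B D := by
    rw [hEdef]; exact gamma'_add r A B C D
  have hQeq : QQ = g0 + h * (u + v) + h^2 * Rm := by
    rw [hQsplit, hsum0, hsum1, hsum2, hgamE, hudef, hvdef]; ring
  -- Step 5 : bounds
  have hΛ0 : 0 ≤ Λ := by
    rw [hLam]
    have := frob_nonneg A; have := frob_nonneg B; have := frob_nonneg C; have := frob_nonneg D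
    linarith
  have hA_le : ∀ i j, |A i j| ≤ Λ := by
    intro i j
    rw [hLam]
    have := abs_entry_le_frob A i j
    have := frob_nonneg B; have := frob_nonneg C; have := frob_nonneg D
    linarith
  have hB_le : ∀ i j, |B i j| ≤ Λ := by
    intro i j
    rw [hLam]
    have := abs_entry_le_frob B i j
    have := frob_nonneg A; have := frob_nonneg C; have := frob_nonneg D
    linarith
  have hC_le : ∀ i j, |C i j| ≤ Λ := by
    intro i j
    rw [hLam]
    have := abs_entry_le_frob C i j
    have := frob_nonneg A; have := frob_nonneg B; have := frob_nonneg D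
    linarith
  have hD_le : ∀ i j, |D i j| ≤ Λ := by
    intro i j
    rw [hLam]
    have := abs_entry_le_frob D i j
    have := frob_nonneg A; have := frob_nonneg B; have := frob_nonneg C
    linarith
  have hE_le : ∀ i j, |E i j| ≤ Λ := by
    intro i j
    rw [hLam, hEdef]
    have h1 := abs_entry_le_frob C i j
    have h2 := abs_entry_le_frob D i j
    have h3 : |(C + D) i j| ≤ |C i j| + |D i j| := by
      rw [Matrix.add_apply]; exact abs_add_le _ _
    have := frob_nonneg A; have := frob_nonneg B
    linarith
  have hpickb : ∀ (X : Matrix (Fin d) (Fin d) ℝ), (∀ i j, |X i j| ≤ Λ) →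
      ∀ σ i j, |pick A B X σ i j| ≤ Λ := by
    intro X hX σ i j
    simp only [pick, Matrix.of_apply]
    split_ifs
    · exact hA_le i j
    · exact hB_le i j
    · exact hX i j
  have hdetb : ∀ (X : Matrix (Fin d) (Fin d) ℝ), (∀ i j, |X i j| ≤ Λ) →
      ∀ σ, |(pick A B X σ).det| ≤ (d.factorial : ℝ) * Λ^d := by
    intro X hX σ
    exact abs_det_le' (fun i j => hpickb X hX σ i j)
  have hcard3 : ∀ t : Finset (Fin d → Fin 3), (t.card : ℝ) ≤ ((3^d : ℕ) : ℝ) := by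
    intro t
    have := Finset.card_le_univ t
    have hcf : Fintype.card (Fin d → Fin 3) = 3^d := by
      rw [Fintype.card_fun, Fintype.card_fin, Fintype.card_fin]
    rw [hcf] at this
    exact_mod_cast this
  have hfacCC : ((3^d : ℕ) : ℝ) * ((d.factorial : ℝ)) ≤ CC := by
    rw [hCCdef]
    have : 3^d * d.factorial ≤ 3 ^ d * 2 ^ d * (d + 1) * d.factorial := by
      have h1 : 1 ≤ 2^d * (d+1) := Nat.one_le_iff_ne_zero.mpr (by positivity)
      calc 3^d * d.factorial = 3^d * 1 * d.factorial := by ring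
        _ ≤ 3^d * (2^d * (d+1)) * d.factorial :=
            Nat.mul_le_mul_right _ (Nat.mul_le_mul_left _ h1)
        _ = 3 ^ d * 2 ^ d * (d + 1) * d.factorial := by ring
    exact_mod_cast this
  have hΛd0 : (0:ℝ) ≤ Λ^d := pow_nonneg hΛ0 d
  have hsumbnd : ∀ (t : Finset (Fin d → Fin 3)) (X : Matrix (Fin d) (Fin d) ℝ),
      (∀ i j, |X i j| ≤ Λ) →
      |∑ σ ∈ t, (pick A B X σ).det| ≤ CC * Λ^d := by
    intro t X hX
    refine (abs_sum_le_card_mul t _ ((d.factorial : ℝ) * Λ^d)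
      (fun σ _ => hdetb X hX σ)).trans ?_
    calc (t.card : ℝ) * ((d.factorial : ℝ) * Λ^d)
        ≤ ((3^d : ℕ) : ℝ) * ((d.factorial : ℝ) * Λ^d) := by
          refine mul_le_mul_of_nonneg_right (hcard3 t) ?_
          exact mul_nonneg (Nat.cast_nonneg _) hΛd0
      _ = (((3^d : ℕ) : ℝ) * (d.factorial : ℝ)) * Λ^d := by ring
      _ ≤ CC * Λ^d := mul_le_mul_of_nonneg_right hfacCC hΛd0
  have hgamB : ∀ m : ℕ, |gammaR m A B| ≤ CC * Λ^d := by
    intro m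
    rw [← sum_pick_eq_gammaR A B E m]
    exact hsumbnd _ E hE_le
  have hgpB : |gammaPred r A B| ≤ CC * Λ^d := by
    rcases Nat.eq_zero_or_pos r with h0 | hpos
    · rw [h0]
      simp only [gammaPred, if_pos rfl, if_true, eq_self_iff_true, abs_zero]
      exact mul_nonneg (le_of_lt hCCpos) hΛd0
    · rw [gammaPred, if_neg (by omega)]
      exact hgamB (r-1)
  have hg'C : |gamma' r A B C| ≤ CC * Λ^d := by
    rw [← sum_pick_eq_gamma' A B C r]
    exact hsumbnd _ C hC_le
  have hg0b : |g0| ≤ CC * Λ^d := by rw [hg0def]; exact hgamB r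
  have hub : |u| ≤ 2 * (CC * Λ^d) := by
    rw [hudef]
    calc |gammaPred r A B + gamma' r A B C| ≤ |gammaPred r A B| + |gamma' r A B C| :=
          abs_add_le _ _
      _ ≤ 2 * (CC * Λ^d) := by linarith
  -- refined bound on v
  have hΛd1 : (0:ℝ) ≤ Λ^(d-1) := pow_nonneg hΛ0 _
  have hfd0 : (0:ℝ) ≤ frob D := frob_nonneg D
  have hvb : |v| ≤ CC * (frob D * Λ^(d-1)) := by
    rw [hvdef, ← sum_pick_eq_gamma' A B D r]
    refine (abs_sum_le_card_mul _ _ ((d.factorial : ℝ) * (frob D * Λ^(d-1)))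
      (fun σ hσ => ?_)).trans ?_
    · -- each term
      have hσ2 : #(univ.filter fun j => σ j = 2) = 1 := (Finset.mem_filter.mp hσ).2.2
      obtain ⟨k, hk⟩ := Finset.card_eq_one.mp hσ2
      have hσk : σ k = 2 := by
        have : k ∈ univ.filter fun j => σ j = 2 :=
          (Finset.ext_iff.mp hk k).mpr (Finset.mem_singleton_self k)
        exact (Finset.mem_filter.mp this).2
      refine abs_det_le_col hfd0 hΛ0 k (fun i => ?_) (fun i j => hpickb D hD_le σ i j)
      simp only [pick, Matrix.of_apply, hσk]
      rw [if_neg (by decide), if_neg (by decide)]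
      exact abs_entry_le_frob D i k
    · calc (_ : ℝ) ≤ ((3^d : ℕ) : ℝ) * ((d.factorial : ℝ) * (frob D * Λ^(d-1))) := by
            refine mul_le_mul_of_nonneg_right (hcard3 _) ?_
            exact mul_nonneg (Nat.cast_nonneg _) (mul_nonneg hfd0 hΛd1)
        _ = (((3^d : ℕ) : ℝ) * (d.factorial : ℝ)) * (frob D * Λ^(d-1)) := by ring
        _ ≤ CC * (frob D * Λ^(d-1)) := by
            refine mul_le_mul_of_nonneg_right hfacCC ?_
            exact mul_nonneg hfd0 hΛd1
  have hfDΛ : frob D ≤ Λ := by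
    rw [hLam]
    have := frob_nonneg A; have := frob_nonneg B; have := frob_nonneg C
    linarith
  have hΛsplit : Λ^d = Λ * Λ^(d-1) := by
    rw [← pow_succ']
    congr 1
    omega
  have hvb' : |v| ≤ CC * Λ^d := by
    refine hvb.trans ?_
    rw [hΛsplit]
    have : frob D * Λ^(d-1) ≤ Λ * Λ^(d-1) := mul_le_mul_of_nonneg_right hfDΛ hΛd1
    have hCC0 : (0:ℝ) ≤ CC := le_of_lt hCCpos
    exact mul_le_mul_of_nonneg_left this hCC0
  have hRmb : |Rm| ≤ CC * Λ^d := by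
    rw [hRmdef]
    have hterm : ∀ σ ∈ SS.filter (fun σ => 2 ≤ ee σ),
        |h ^ (ee σ - 2) * (pick A B E σ).det| ≤ (d.factorial : ℝ) * Λ^d := by
      intro σ _
      have h1 : |h ^ (ee σ - 2)| ≤ 1 := by
        rw [abs_of_pos (pow_pos hh0 _)]
        exact pow_le_one₀ (le_of_lt hh0) hh1
      have := abs_mul_le' h1 (hdetb E hE_le σ)
      rwa [one_mul] at this
    refine (abs_sum_le_card_mul _ _ ((d.factorial : ℝ) * Λ^d) hterm).trans ?_
    calc (_ : ℝ) ≤ ((3^d : ℕ) : ℝ) * ((d.factorial : ℝ) * Λ^d) := by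
          refine mul_le_mul_of_nonneg_right (hcard3 _) ?_
          exact mul_nonneg (Nat.cast_nonneg _) hΛd0
      _ = (((3^d : ℕ) : ℝ) * (d.factorial : ℝ)) * Λ^d := by ring
      _ ≤ CC * Λ^d := mul_le_mul_of_nonneg_right hfacCC hΛd0
  -- Step 6 : conclusion
  set P : ℝ := CC * Λ^d with hPdef
  set pp : ℝ := CC * (frob D * Λ^(d-1)) with hppdef
  have hP0 : 0 ≤ P := by rw [hPdef]; exact mul_nonneg (le_of_lt hCCpos) hΛd0
  have hpp0 : 0 ≤ pp := by
    rw [hppdef]; exact mul_nonneg (le_of_lt hCCpos) (mul_nonneg hfd0 hΛd1)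
  have key : QQ^2 - g0^2 - 2*h*g0*u
      = 2*h*(g0*v) + h^2*(2*(g0*Rm) + (u+v)*(u+v) + (2*h)*((u+v)*Rm) + (h*Rm)*(h*Rm)) := by
    rw [hQeq]; ring
  have hg0v : |g0 * v| ≤ P * pp := abs_mul_le' hg0b hvb
  have hg0R : |g0 * Rm| ≤ P * P := abs_mul_le' hg0b hRmb
  have huv : |u + v| ≤ 3 * P := by
    calc |u + v| ≤ |u| + |v| := abs_add_le _ _
      _ ≤ 2*P + P := add_le_add hub hvb'
      _ = 3*P := by ring
  have huvR : |(u+v) * Rm| ≤ (3*P) * P := abs_mul_le' huv hRmb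
  have hhRm : |h * Rm| ≤ P := by
    rw [abs_mul, abs_of_pos hh0]
    calc h * |Rm| ≤ 1 * P := mul_le_mul hh1 hRmb (abs_nonneg _) zero_le_one
      _ = P := one_mul P
  have hhRm2 : |(h*Rm)*(h*Rm)| ≤ P * P := abs_mul_le' hhRm hhRm
  have huv2 : |(u+v)*(u+v)| ≤ (3*P)*(3*P) := abs_mul_le' huv huv
  have h2h : |(2:ℝ)*h| ≤ 2 := by
    rw [abs_of_pos (by linarith : (0:ℝ) < 2*h)]
    linarith
  have h2huvR : |(2*h)*((u+v)*Rm)| ≤ 2*((3*P)*P) := abs_mul_le' h2h huvR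
  have h2g0R : |(2:ℝ)*(g0*Rm)| ≤ 2*(P*P) :=
    abs_mul_le' (le_of_eq (abs_two)) hg0R
  have hinner : |2*(g0*Rm) + (u+v)*(u+v) + (2*h)*((u+v)*Rm) + (h*Rm)*(h*Rm)| ≤ 18*(P*P) := by
    have t3 := abs_add_le (2*(g0*Rm) + (u+v)*(u+v) + (2*h)*((u+v)*Rm)) ((h*Rm)*(h*Rm))
    have t2 := abs_add_le (2*(g0*Rm) + (u+v)*(u+v)) ((2*h)*((u+v)*Rm))
    have t1 := abs_add_le (2*(g0*Rm)) ((u+v)*(u+v))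
    linarith [h2g0R, huv2, h2huvR, hhRm2]
  have hpow1 : Λ^d * Λ^(d-1) = Λ^(2*d-1) := by
    rw [← pow_add]
    congr 1
    omega
  have hpow2 : Λ^d * Λ^d = Λ^(2*d-1) * Λ := by
    rw [← pow_add, ← pow_succ]
    congr 1
    omega
  have e1 : P * pp = CC^2 * (Λ^(2*d-1) * frob D) := by
    rw [hPdef, hppdef, ← hpow1]; ring
  have e2 : P * P = CC^2 * (Λ^(2*d-1) * Λ) := by
    rw [hPdef, ← hpow2]; ring
  have hX0 : (0:ℝ) ≤ Λ^(2*d-1) := pow_nonneg hΛ0 _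
  rw [hLHS, key]
  calc |2*h*(g0*v) + h^2*(2*(g0*Rm) + (u+v)*(u+v) + (2*h)*((u+v)*Rm) + (h*Rm)*(h*Rm))|
      ≤ |2*h*(g0*v)|
        + |h^2*(2*(g0*Rm) + (u+v)*(u+v) + (2*h)*((u+v)*Rm) + (h*Rm)*(h*Rm))| := abs_add_le _ _
    _ ≤ (2*h)*(P*pp) + h^2*(18*(P*P)) := by
        refine add_le_add ?_ ?_
        · have h1 : |2*h| ≤ 2*h := le_of_eq (abs_of_pos (by linarith))
          have := abs_mul_le' h1 hg0v
          calc |2*h*(g0*v)| = |(2*h)*(g0*v)| := by ring_nf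
            _ ≤ (2*h)*(P*pp) := abs_mul_le' h1 hg0v
        · have h2 : |h^2| ≤ h^2 := le_of_eq (abs_of_pos (pow_pos hh0 2))
          exact abs_mul_le' h2 hinner
    _ ≤ (18 * CC ^ 2 + 1) * h * Λ ^ (2 * d - 1) * (h * Λ + frob D) := by
        rw [e1, e2]
        have m1 : (0:ℝ) ≤ h * (Λ^(2*d-1) * frob D) :=
          mul_nonneg (le_of_lt hh0) (mul_nonneg hX0 hfd0)
        have m2 : (0:ℝ) ≤ h * (h * (Λ^(2*d-1) * Λ)) :=
          mul_nonneg (le_of_lt hh0) (mul_nonneg (le_of_lt hh0) (mul_nonneg hX0 hΛ0))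
        have m3 : (0:ℝ) ≤ CC^2 * (h * (Λ^(2*d-1) * frob D)) :=
          mul_nonneg (sq_nonneg CC) m1
        linarith [m1, m2, m3]
end
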